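/- arXiv:1906.05666 — 8 statements merged into one kernel-verified Lean document; each statement's English description precedes it below -/
import Mathlib

section
/- Suppose (ε_k) is a sequence of positive reals with ε_k → 0 and, for each k, (μ_k, v_k) is an eigenpair of the ε_k-perturbed problem with ‖v_k‖_X = 1, a(v_k, u_0) ≥ 0, and μ_k → λ_0. Then v_k → u_0 strongly in X. -/
open scoped RealInnerProductSpace
open Filter

set_option maxHeartbeats 1000000 in
/-- Abstract form of Lemma 2.2: if `(μ k, v k)` are normalized, sign-normalized eigenpairs of
the `ε k`-perturbed problems with `ε k → 0` and `μ k → λ₀`, then `v k → u₀` strongly. -/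
theorem perturbed_eigenfunctions_converge
    {X : Type*} [NormedAddCommGroup X] [InnerProductSpace ℝ X] [CompleteSpace X]
    (a b : X →ₗ[ℝ] X →ₗ[ℝ] ℝ)
    (ha_symm : ∀ u v : X, a u v = a v u)
    (hb_symm : ∀ u v : X, b u v = b v u)
    (ha_cont : Continuous fun p : X × X => a p.1 p.2)
    (hb_cont : Continuous fun p : X × X => b p.1 p.2)
    (ha_nonneg : ∀ u : X, 0 ≤ a u u)
    (hb_posdef : ∀ u : X, u ≠ 0 → 0 < b u u)
    (hb_compact : ∀ (v : ℕ → X) (w : X),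
        (∀ φ : X, Filter.Tendsto (fun k => ⟪v k, φ⟫) Filter.atTop (nhds ⟪w, φ⟫)) →
        Filter.Tendsto (fun k => b (v k - w) (v k - w)) Filter.atTop (nhds 0))
    (lam0 : ℝ) (hlam0 : 0 < lam0) (u0 : X) (hu0 : ‖u0‖ = 1)
    (h_eig0 : ∀ φ : X, a u0 φ = lam0 * b u0 φ)
    (h_rayleigh : ∀ u : X, lam0 * b u u ≤ a u u)
    (lam2 : ℝ) (hlam2 : lam0 < lam2)
    (h_gap : ∀ ξ : X, a ξ u0 = 0 → lam2 * b ξ ξ ≤ a ξ ξ)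
    (ε : ℕ → ℝ) (hε_pos : ∀ k, 0 < ε k) (hε_lim : Tendsto ε atTop (nhds 0))
    (μ : ℕ → ℝ) (v : ℕ → X)
    (hv_ne : ∀ k, v k ≠ 0)
    (h_pair : ∀ k, ∀ φ : X, ε k * ⟪v k, φ⟫ + a (v k) φ = μ k * b (v k) φ)
    (hv_norm : ∀ k, ‖v k‖ = 1)
    (hv_sign : ∀ k, 0 ≤ a (v k) u0)
    (hμ_lim : Tendsto μ atTop (nhds lam0)) :
    Tendsto v atTop (nhds u0) := by
  classical
  have hu0_ne : u0 ≠ 0 := by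
    intro h; rw [h, norm_zero] at hu0; norm_num at hu0
  have hb00 : 0 < b u0 u0 := hb_posdef u0 hu0_ne
  have hApos : 0 < a u0 u0 := by
    have := h_eig0 u0; rw [this]; positivity
  have hb_nonneg : ∀ u : X, 0 ≤ b u u := by
    intro u
    by_cases h : u = 0
    · simp [h]
    · exact (hb_posdef u h).le
  have hu0u0 : ⟪u0, u0⟫ = 1 := by
    rw [real_inner_self_eq_norm_mul_norm, hu0]; ring
  -- the decomposition v k = al k • u0 + ξ k with a (ξ k) u0 = 0
  set al : ℕ → ℝ := fun k => a (v k) u0 / a u0 u0 with hald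
  set ξ : ℕ → X := fun k => v k - al k • u0 with hxid
  have hal_nonneg : ∀ k, 0 ≤ al k := fun k => div_nonneg (hv_sign k) hApos.le
  have hdecomp : ∀ k, v k = ξ k + al k • u0 := by
    intro k; rw [hxid]; simp
  have h_axiu0 : ∀ k, a (ξ k) u0 = 0 := by
    intro k
    rw [hxid]
    simp only [map_sub, map_smul, LinearMap.sub_apply, LinearMap.smul_apply, smul_eq_mul]
    rw [hald]
    field_simp
    ring
  have h_au0xi : ∀ k, a u0 (ξ k) = 0 := by
    intro k; rw [ha_symm]; exact h_axiu0 k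
  have h_bu0xi : ∀ k, b u0 (ξ k) = 0 := by
    intro k
    have h1 : a u0 (ξ k) = lam0 * b u0 (ξ k) := h_eig0 _
    rw [h_au0xi k] at h1
    have := h1.symm
    rcases mul_eq_zero.mp this with h | h
    · exact absurd h (ne_of_gt hlam0)
    · exact h
  -- key identity from testing the eigen-equation with ξ k
  have hIk : ∀ k, ε k * ⟪v k, ξ k⟫ + a (ξ k) (ξ k) = μ k * b (ξ k) (ξ k) := by
    intro k
    have hp := h_pair k (ξ k)
    have hav : a (v k) (ξ k) = a (ξ k) (ξ k) := by
      conv_lhs => rw [hdecomp k]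
      simp [map_add, map_smul, LinearMap.add_apply, LinearMap.smul_apply, smul_eq_mul,
        h_au0xi k]
    have hbv : b (v k) (ξ k) = b (ξ k) (ξ k) := by
      conv_lhs => rw [hdecomp k]
      simp [map_add, map_smul, LinearMap.add_apply, LinearMap.smul_apply, smul_eq_mul,
        h_bu0xi k]
    rw [hav, hbv] at hp
    exact hp
  have hxiinner : ∀ k, ⟪v k, ξ k⟫ = 1 - al k * ⟪v k, u0⟫ := by
    intro k
    rw [hxid]
    simp only [inner_sub_right, real_inner_smul_right]
    rw [real_inner_self_eq_norm_mul_norm, hv_norm k]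
    ring
  -- a continuous linear functional representing a (·) u0, to bound al
  have hacont : Continuous fun x : X => a x u0 :=
    ha_cont.comp (continuous_id.prodMk continuous_const)
  set Fa : X →L[ℝ] ℝ := ⟨a.flip u0, hacont⟩ with hFad
  have hFa_apply : ∀ x : X, Fa x = a x u0 := fun x => rfl
  set M : ℝ := ‖Fa‖ / a u0 u0 with hMd
  have hal_abs : ∀ k, |al k| ≤ M := by
    intro k
    have h1 : |a (v k) u0| ≤ ‖Fa‖ := by
      have h2 := Fa.le_opNorm (v k)
      rw [hv_norm k, mul_one] at h2
      rw [hFa_apply, Real.norm_eq_abs] at h2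
      exact h2
    rw [hald, hMd, abs_div, abs_of_pos hApos]
    exact div_le_div_of_nonneg_right h1 hApos.le
  have hM_nonneg : 0 ≤ M := le_trans (abs_nonneg _) (hal_abs 0)
  have hxi_norm : ∀ k, ‖ξ k‖ ≤ 1 + M := by
    intro k
    calc ‖ξ k‖ ≤ ‖v k‖ + ‖al k • u0‖ := by rw [hxid]; exact norm_sub_le _ _
    _ = 1 + |al k| := by rw [hv_norm k, norm_smul, hu0, mul_one, Real.norm_eq_abs]
    _ ≤ 1 + M := by linarith [hal_abs k]
  -- eventual estimates coming from the spectral gap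
  have hγ : 0 < (lam2 - lam0) / 2 := by linarith
  have hμev : ∀ᶠ k in atTop, μ k < lam0 + (lam2 - lam0) / 2 := by
    have h1 : Set.Iio (lam0 + (lam2 - lam0) / 2) ∈ nhds lam0 :=
      Iio_mem_nhds (by linarith)
    exact hμ_lim h1
  have hstep : ∀ᶠ k in atTop,
      b (ξ k) (ξ k) ≤ ε k * ((1 + M) / ((lam2 - lam0) / 2)) ∧ 1 ≤ al k * ⟪v k, u0⟫ := by
    filter_upwards [hμev] with k hk
    have hI := hIk k
    have hgap := h_gap (ξ k) (h_axiu0 k)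
    have hbnn := hb_nonneg (ξ k)
    have h1 : ε k * ⟪v k, ξ k⟫ ≤ (μ k - lam2) * b (ξ k) (ξ k) := by nlinarith
    have hμlt2 : μ k < lam2 := by linarith
    have h2 : (μ k - lam2) * b (ξ k) (ξ k) ≤ 0 :=
      mul_nonpos_of_nonpos_of_nonneg (by linarith) hbnn
    have hvξ : ⟪v k, ξ k⟫ ≤ 0 := by
      by_contra hpos
      push_neg at hpos
      have := mul_pos (hε_pos k) hpos
      linarith
    constructor
    · have habs : -⟪v k, ξ k⟫ ≤ 1 + M := by
        have h3 := abs_real_inner_le_norm (v k) (ξ k)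
        rw [hv_norm k, one_mul] at h3
        calc -⟪v k, ξ k⟫ ≤ |⟪v k, ξ k⟫| := neg_le_abs _
        _ ≤ ‖ξ k‖ := h3
        _ ≤ 1 + M := hxi_norm k
      have hc : ε k * (-⟪v k, ξ k⟫) ≤ ε k * (1 + M) :=
        mul_le_mul_of_nonneg_left habs (hε_pos k).le
      have h4 : (lam2 - μ k) * b (ξ k) (ξ k) ≤ ε k * (1 + M) := by nlinarith
      have h5 : ((lam2 - lam0) / 2) * b (ξ k) (ξ k) ≤ (lam2 - μ k) * b (ξ k) (ξ k) :=
        mul_le_mul_of_nonneg_right (by linarith) hbnn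
      rw [mul_div_assoc'] at *
      rw [le_div_iff₀ hγ]
      calc b (ξ k) (ξ k) * ((lam2 - lam0) / 2)
          = ((lam2 - lam0) / 2) * b (ξ k) (ξ k) := by ring
      _ ≤ ε k * (1 + M) := le_trans h5 h4
    · have h6 := hxiinner k
      rw [h6] at hvξ
      linarith
  have hbxi0 : Tendsto (fun k => b (ξ k) (ξ k)) atTop (nhds 0) := by
    apply squeeze_zero' (Eventually.of_forall fun k => hb_nonneg (ξ k))
      (hstep.mono fun k h => h.1)
    have := hε_lim.mul_const ((1 + M) / ((lam2 - lam0) / 2))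
    simpa using this
  have hge1 : ∀ᶠ k in atTop, 1 ≤ al k * ⟪v k, u0⟫ := hstep.mono fun k h => h.2
  -- main step : ⟪v k, u0⟫ → 1
  have hkey : Tendsto (fun k => ⟪v k, u0⟫) atTop (nhds 1) := by
    by_contra hcon
    rw [Metric.tendsto_atTop] at hcon
    push_neg at hcon
    obtain ⟨d, hd, hfr⟩ := hcon
    have hvu0le : ∀ n, ⟪v n, u0⟫ ≤ 1 := by
      intro n
      have h1 := real_inner_le_norm (v n) u0
      rw [hv_norm n, hu0, one_mul] at h1
      exact h1
    have hSfreq : ∃ᶠ n in atTop, ⟪v n, u0⟫ ≤ 1 - d := by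
      rw [frequently_atTop]
      intro N
      obtain ⟨n, hn, hdist⟩ := hfr N
      refine ⟨n, hn, ?_⟩
      rw [Real.dist_eq, abs_of_nonpos (by linarith [hvu0le n])] at hdist
      linarith
    have hNB : (atTop ⊓ 𝓟 {n | ⟪v n, u0⟫ ≤ 1 - d}).NeBot :=
      frequently_iff_neBot.mp hSfreq
    set U : Ultrafilter ℕ := Ultrafilter.of (atTop ⊓ 𝓟 {n | ⟪v n, u0⟫ ≤ 1 - d}) with hUd
    have hUle : (U : Filter ℕ) ≤ atTop ⊓ 𝓟 {n | ⟪v n, u0⟫ ≤ 1 - d} := Ultrafilter.of_le _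
    have hU_atTop : (U : Filter ℕ) ≤ atTop := hUle.trans inf_le_left
    have hSU : ∀ᶠ k in (U : Filter ℕ), ⟪v k, u0⟫ ≤ 1 - d :=
      hUle.trans inf_le_right (mem_principal_self _)
    -- construct the weak limit w along the ultrafilter U
    have hlimex : ∀ φ : X, ∃ c : ℝ, Tendsto (fun k => ⟪v k, φ⟫) (U : Filter ℕ) (nhds c) := by
      intro φ
      have hbound : ∀ k, ⟪v k, φ⟫ ∈ Set.Icc (-‖φ‖) ‖φ‖ := by
        intro k
        have h1 := abs_real_inner_le_norm (v k) φ
        rw [hv_norm k, one_mul] at h1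
        exact abs_le.mp h1
      have hmem : (U.map fun k => ⟪v k, φ⟫ : Filter ℝ) ≤ 𝓟 (Set.Icc (-‖φ‖) ‖φ‖) := by
        rw [Ultrafilter.coe_map]
        rw [le_principal_iff, mem_map]
        exact Eventually.of_forall hbound
      obtain ⟨c, _, hc⟩ := (isCompact_Icc (a := -‖φ‖) (b := ‖φ‖)).ultrafilter_le_nhds
        (U.map fun k => ⟪v k, φ⟫) hmem
      rw [Ultrafilter.coe_map] at hc
      exact ⟨c, hc⟩
    set L : X → ℝ := fun φ => (hlimex φ).choose with hLd
    have hL : ∀ φ : X, Tendsto (fun k => ⟪v k, φ⟫) (U : Filter ℕ) (nhds (L φ)) :=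
      fun φ => (hlimex φ).choose_spec
    have hL_add : ∀ x y : X, L (x + y) = L x + L y := by
      intro x y
      have h1 := hL (x + y)
      have h2 := (hL x).add (hL y)
      simp only [inner_add_right] at h1
      exact tendsto_nhds_unique h1 h2
    have hL_smul : ∀ (c : ℝ) (x : X), L (c • x) = c * L x := by
      intro c x
      have h1 := hL (c • x)
      have h2 := (hL x).const_mul c
      simp only [real_inner_smul_right] at h1
      exact tendsto_nhds_unique h1 h2
    set Llin : X →ₗ[ℝ] ℝ :=
      { toFun := L
        map_add' := hL_add
        map_smul' := by intro c x; simpa using hL_smul c x } with hLlind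
    have hLbound : ∀ φ : X, ‖Llin φ‖ ≤ 1 * ‖φ‖ := by
      intro φ
      have h1 : Tendsto (fun k => |⟪v k, φ⟫|) (U : Filter ℕ) (nhds |L φ|) := (hL φ).abs
      have h2 : ∀ k, |⟪v k, φ⟫| ≤ ‖φ‖ := by
        intro k
        have h3 := abs_real_inner_le_norm (v k) φ
        rw [hv_norm k, one_mul] at h3
        exact h3
      have h4 := le_of_tendsto h1 (Eventually.of_forall h2)
      rw [one_mul]
      rw [Real.norm_eq_abs]; exact h4
    set Fcl : X →L[ℝ] ℝ := LinearMap.mkContinuous Llin 1 hLbound with hFcld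
    set w : X := (InnerProductSpace.toDual ℝ X).symm Fcl with hwd
    have hweak : ∀ φ : X, Tendsto (fun k => ⟪v k, φ⟫) (U : Filter ℕ) (nhds ⟪w, φ⟫) := by
      intro φ
      have h1 : ⟪w, φ⟫ = L φ := by
        rw [hwd]
        exact InnerProductSpace.toDual_symm_apply
      rw [h1]
      exact hL φ
    have hCLMlim : ∀ G : X →L[ℝ] ℝ,
        Tendsto (fun k => G (v k)) (U : Filter ℕ) (nhds (G w)) := by
      intro G
      have hzx : ∀ x : X, ⟪x, (InnerProductSpace.toDual ℝ X).symm G⟫ = G x := by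
        intro x
        rw [real_inner_comm]
        exact InnerProductSpace.toDual_symm_apply
      have h9 := hweak ((InnerProductSpace.toDual ℝ X).symm G)
      simp only [hzx] at h9
      exact h9
    -- the limit of al and the "orthogonal part" of w
    set αs : ℝ := a w u0 / a u0 u0 with hαsd
    have halimU : Tendsto al (U : Filter ℕ) (nhds αs) := by
      have h1 := (hCLMlim Fa).div_const (a u0 u0)
      simp only [hFa_apply] at h1
      exact h1
    set η : X := w - αs • u0 with hηd
    have hξweak : ∀ φ : X, Tendsto (fun k => ⟪ξ k, φ⟫) (U : Filter ℕ) (nhds ⟪η, φ⟫) := by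
      intro φ
      have h1 : ∀ k, ⟪ξ k, φ⟫ = ⟪v k, φ⟫ - al k * ⟪u0, φ⟫ := by
        intro k
        rw [hxid]
        simp [inner_sub_left, real_inner_smul_left]
      have h2 : ⟪η, φ⟫ = ⟪w, φ⟫ - αs * ⟪u0, φ⟫ := by
        rw [hηd]
        simp [inner_sub_left, real_inner_smul_left]
      simp only [h1, h2]
      exact (hweak φ).sub (halimU.mul_const _)
    -- b (ξ k) η → b η η
    have hbcont : Continuous fun x : X => b x η :=
      hb_cont.comp (continuous_id.prodMk continuous_const)
    set Gb : X →L[ℝ] ℝ := ⟨b.flip η, hbcont⟩ with hGbd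
    have hGb_apply : ∀ x : X, Gb x = b x η := fun x => rfl
    have hzb : ∀ x : X, ⟪x, (InnerProductSpace.toDual ℝ X).symm Gb⟫ = b x η := by
      intro x
      rw [real_inner_comm]
      exact InnerProductSpace.toDual_symm_apply
    have hbξη : Tendsto (fun k => b (ξ k) η) (U : Filter ℕ) (nhds (b η η)) := by
      have h1 := hξweak ((InnerProductSpace.toDual ℝ X).symm Gb)
      simp only [hzb] at h1
      exact h1
    have hbxi0U : Tendsto (fun k => b (ξ k) (ξ k)) (U : Filter ℕ) (nhds 0) :=
      hbxi0.mono_left hU_atTop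
    have hsq : ∀ k, 2 * b (ξ k) η - b η η ≤ b (ξ k) (ξ k) := by
      intro k
      have h0 := hb_nonneg (ξ k - η)
      have h1 : b (ξ k - η) (ξ k - η) = b (ξ k) (ξ k) - 2 * b (ξ k) η + b η η := by
        simp only [map_sub, LinearMap.sub_apply]
        rw [hb_symm η (ξ k)]
        ring
      rw [h1] at h0
      linarith
    have hηle : b η η ≤ 0 := by
      have hlhs : Tendsto (fun k => 2 * b (ξ k) η - b η η) (U : Filter ℕ)
          (nhds (2 * b η η - b η η)) := by
        exact ((hbξη.const_mul 2).sub tendsto_const_nhds)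
      have h2 := le_of_tendsto_of_tendsto' hlhs hbxi0U hsq
      linarith
    have hη0 : η = 0 := by
      by_contra hne
      exact absurd hηle (not_le.mpr (hb_posdef η hne))
    have hw0 : w = αs • u0 := by
      have := hη0
      rw [hηd] at this
      exact sub_eq_zero.mp this
    -- limits and contradiction
    have hvUlim : Tendsto (fun k => ⟪v k, u0⟫) (U : Filter ℕ) (nhds αs) := by
      have h1 := hweak u0
      have h2 : ⟪w, u0⟫ = αs := by
        rw [hw0, real_inner_smul_left, hu0u0, mul_one]
      rwa [h2] at h1
    have h1le : 1 ≤ αs * αs :=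
      ge_of_tendsto (halimU.mul hvUlim) (hge1.filter_mono hU_atTop)
    have hαnn : 0 ≤ αs := ge_of_tendsto halimU (Eventually.of_forall hal_nonneg)
    have hαle : αs ≤ 1 - d := le_of_tendsto hvUlim hSU
    have hα1 : 1 ≤ αs := by nlinarith
    linarith
  -- conclude strong convergence from ⟪v k, u0⟫ → 1
  rw [tendsto_iff_norm_sub_tendsto_zero]
  have h2 : Tendsto (fun k => 2 - 2 * ⟪v k, u0⟫) atTop (nhds 0) := by
    have := (tendsto_const_nhds (x := (2 : ℝ)) (f := atTop)).sub (hkey.const_mul 2)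
    simpa using this
  have heq : ∀ k, ‖v k - u0‖ = Real.sqrt (2 - 2 * ⟪v k, u0⟫) := by
    intro k
    have h3 : ‖v k - u0‖ ^ 2 = 2 - 2 * ⟪v k, u0⟫ := by
      rw [norm_sub_sq_real, hv_norm k, hu0]
      ring
    rw [← h3, Real.sqrt_sq (norm_nonneg _)]
  have h4 : Tendsto (fun k => Real.sqrt (2 - 2 * ⟪v k, u0⟫)) atTop (nhds 0) := by
    have := (Real.continuous_sqrt.tendsto 0).comp h2
    simpa [Function.comp_def] using this
  simp only [heq]
  exact h4
end

section
/- Let ε > 0 and let (λ, u) be an eigenpair of the ε-perturbed problem (u ≠ 0). Then there exists no v ∈ X such that ε⟨v, φ⟩_X + a(v, φ) − λ b(v, φ) = ⟨u, φ⟩_X for all φ ∈ X. -/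
open scoped RealInnerProductSpace
open Filter

/-- The algebraic-simplicity step (2.15): the eigenfunction `u` of the ε-perturbed problem
is not in the range of the operator `L_ε(ε, ·)`. -/
theorem eigenfunction_not_in_range
    {X : Type*} [NormedAddCommGroup X] [InnerProductSpace ℝ X] [CompleteSpace X]
    (a b : X →ₗ[ℝ] X →ₗ[ℝ] ℝ)
    (ha_symm : ∀ u v : X, a u v = a v u)
    (hb_symm : ∀ u v : X, b u v = b v u)
    (ha_cont : Continuous fun p : X × X => a p.1 p.2)
    (hb_cont : Continuous fun p : X × X => b p.1 p.2)
    (ha_nonneg : ∀ u : X, 0 ≤ a u u)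
    (hb_posdef : ∀ u : X, u ≠ 0 → 0 < b u u)
    (hb_compact : ∀ (v : ℕ → X) (w : X),
        (∀ φ : X, Filter.Tendsto (fun k => ⟪v k, φ⟫) Filter.atTop (nhds ⟪w, φ⟫)) →
        Filter.Tendsto (fun k => b (v k - w) (v k - w)) Filter.atTop (nhds 0))
    (lam0 : ℝ) (hlam0 : 0 < lam0) (u0 : X) (hu0 : ‖u0‖ = 1)
    (h_eig0 : ∀ φ : X, a u0 φ = lam0 * b u0 φ)
    (h_rayleigh : ∀ u : X, lam0 * b u u ≤ a u u)
    (lam2 : ℝ) (hlam2 : lam0 < lam2)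
    (h_gap : ∀ ξ : X, a ξ u0 = 0 → lam2 * b ξ ξ ≤ a ξ ξ)
    (ε : ℝ) (hε : 0 < ε) (lam : ℝ) (u : X) (hu : u ≠ 0)
    (h_pair : ∀ φ : X, ε * ⟪u, φ⟫ + a u φ = lam * b u φ) :
    ¬ ∃ v : X, ∀ φ : X, ε * ⟪v, φ⟫ + a v φ - lam * b v φ = ⟪u, φ⟫ := by
  rintro ⟨v, hv⟩
  have h1 := hv u
  have h2 := h_pair v
  rw [real_inner_comm u v, ha_symm v u, hb_symm v u] at h1
  have : ⟪u, u⟫ = 0 := by linarith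
  exact hu (inner_self_eq_zero.mp this)
end

section
/- There exist s > 0 and δ > 0 such that for every ε ∈ (0, s), any two eigenpairs (λ, u) and (μ, v) of the ε-perturbed problem with |λ − λ_0| < δ and |μ − λ_0| < δ satisfy λ = μ. -/
open scoped RealInnerProductSpace
open Filter

set_option maxHeartbeats 1000000 in
/-- The uniqueness step of Theorem 1.2: for all small `ε > 0`, the ε-perturbed
problem has a unique eigenvalue near `λ₀`. -/
theorem perturbed_eigenvalue_unique_near
    {X : Type*} [NormedAddCommGroup X] [InnerProductSpace ℝ X] [CompleteSpace X]
    (a b : X →ₗ[ℝ] X →ₗ[ℝ] ℝ)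
    (ha_symm : ∀ u v : X, a u v = a v u)
    (hb_symm : ∀ u v : X, b u v = b v u)
    (ha_cont : Continuous fun p : X × X => a p.1 p.2)
    (hb_cont : Continuous fun p : X × X => b p.1 p.2)
    (ha_nonneg : ∀ u : X, 0 ≤ a u u)
    (hb_posdef : ∀ u : X, u ≠ 0 → 0 < b u u)
    (hb_compact : ∀ (v : ℕ → X) (w : X),
        (∀ φ : X, Filter.Tendsto (fun k => ⟪v k, φ⟫) Filter.atTop (nhds ⟪w, φ⟫)) →
        Filter.Tendsto (fun k => b (v k - w) (v k - w)) Filter.atTop (nhds 0))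
    (lam0 : ℝ) (hlam0 : 0 < lam0) (u0 : X) (hu0 : ‖u0‖ = 1)
    (h_eig0 : ∀ φ : X, a u0 φ = lam0 * b u0 φ)
    (h_rayleigh : ∀ u : X, lam0 * b u u ≤ a u u)
    (lam2 : ℝ) (hlam2 : lam0 < lam2)
    (h_gap : ∀ ξ : X, a ξ u0 = 0 → lam2 * b ξ ξ ≤ a ξ ξ)
    : ∃ s : ℝ, 0 < s ∧ ∃ δ : ℝ, 0 < δ ∧ ∀ ε : ℝ, 0 < ε → ε < s →
      ∀ lam μ : ℝ, ∀ u v : X, u ≠ 0 → v ≠ 0 →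
        (∀ φ : X, ε * ⟪u, φ⟫ + a u φ = lam * b u φ) →
        (∀ φ : X, ε * ⟪v, φ⟫ + a v φ = μ * b v φ) →
        |lam - lam0| < δ → |μ - lam0| < δ → lam = μ := by
  -- b is nonnegative
  have hb_nonneg : ∀ x : X, 0 ≤ b x x := by
    intro x
    by_cases hx : x = 0
    · simp [hx]
    · exact (hb_posdef x hx).le
  -- Cauchy-Schwarz for b
  have hb_cs : ∀ x y : X, (b x y) ^ 2 ≤ b x x * b y y := by
    intro x y
    have h : ∀ t : ℝ, 0 ≤ b y y * (t * t) + (2 * b x y) * t + b x x := by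
      intro t
      have h0 := hb_nonneg (x + t • y)
      have expand : b (x + t • y) (x + t • y)
          = b y y * (t * t) + (2 * b x y) * t + b x x := by
        simp only [map_add, map_smul, LinearMap.add_apply, LinearMap.smul_apply,
          smul_eq_mul]
        rw [hb_symm y x]
        ring
      linarith [expand ▸ h0]
    have hd : discrim (b y y) (2 * b x y) (b x x) ≤ 0 := discrim_le_zero h
    rw [discrim] at hd
    nlinarith [hd]
  set δ : ℝ := (lam2 - lam0) / 3 with hδdef
  have hδpos : 0 < δ := by simp only [hδdef]; linarith
  refine ⟨1, one_pos, δ, hδpos, ?_⟩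
  intro ε hε hεs lam μ u v hu0' hv0' hequ heqv hl hm
  have hb0 : 0 < b u0 u0 := hb_posdef u0 (by intro h; rw [h] at hu0; simp at hu0)
  -- key lemma for a single eigenpair
  have key : ∀ (lam' : ℝ) (w : X), w ≠ 0 →
      (∀ φ : X, ε * ⟪w, φ⟫ + a w φ = lam' * b w φ) → |lam' - lam0| < δ →
      ∃ c : ℝ, c ≠ 0 ∧ b w u0 = c * b u0 u0 ∧
        b (w - c • u0) (w - c • u0) < (1 / 2) * (c ^ 2 * b u0 u0) := by
    intro lam' w hw heq hld
    set c : ℝ := b w u0 / b u0 u0 with hcdef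
    have hbw0 : b w u0 = c * b u0 u0 := by
      rw [hcdef]; field_simp
    set ξ : X := w - c • u0 with hξdef
    -- ξ is a-orthogonal to u0
    have haorth : a ξ u0 = 0 := by
      have h1 : b ξ u0 = 0 := by
        simp only [hξdef, map_sub, map_smul, LinearMap.sub_apply, LinearMap.smul_apply,
          smul_eq_mul]
        rw [hbw0]; ring
      have h2 : a u0 ξ = lam0 * b u0 ξ := h_eig0 ξ
      rw [ha_symm ξ u0, h2, hb_symm u0 ξ, h1, mul_zero]
    have hgap := h_gap ξ haorth
    -- expansions
    have hau0 : a u0 u0 = lam0 * b u0 u0 := h_eig0 u0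
    have hawu0 : a w u0 = lam0 * (c * b u0 u0) := by
      rw [ha_symm w u0, h_eig0 w, hb_symm u0 w, hbw0]
    have haξξ : a ξ ξ = a w w - c ^ 2 * (lam0 * b u0 u0) := by
      simp only [hξdef, map_sub, map_smul, LinearMap.sub_apply, LinearMap.smul_apply,
        smul_eq_mul]
      rw [ha_symm u0 w, hawu0, hau0]
      ring
    have hbξξ : b ξ ξ = b w w - c ^ 2 * b u0 u0 := by
      simp only [hξdef, map_sub, map_smul, LinearMap.sub_apply, LinearMap.smul_apply,
        smul_eq_mul]
      rw [hb_symm u0 w, hbw0]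
      ring
    -- eigen equation at w
    have heqw := heq w
    rw [real_inner_self_eq_norm_sq] at heqw
    have hnw : 0 < ‖w‖ ^ 2 := by
      have := norm_pos_iff.mpr hw
      positivity
    have hbww : 0 < b w w := hb_posdef w hw
    have hray := h_rayleigh w
    have hld' : lam' - lam0 < δ := (abs_lt.mp hld).2
    -- a w w < (lam0 + δ) * b w w
    have haww : a w w < (lam0 + δ) * b w w := by
      have e1 : lam' * b w w < (lam0 + δ) * b w w :=
        mul_lt_mul_of_pos_right (by linarith) hbww
      have e2 : 0 < ε * ‖w‖ ^ 2 := mul_pos hε hnw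
      linarith
    have hQ : 0 ≤ b ξ ξ := hb_nonneg ξ
    have hBsplit : b w w = c ^ 2 * b u0 u0 + b ξ ξ := by rw [hbξξ]; ring
    have h5 : lam0 * b w w = lam0 * (c ^ 2 * b u0 u0) + lam0 * b ξ ξ := by
      rw [hBsplit]; ring
    -- from the gap: (lam2 - lam0) * b ξ ξ < δ * b w w
    have hmain : (lam2 - lam0) * b ξ ξ < δ * b w w := by
      linarith [hgap, haξξ, haww, h5, hbξξ]
    have h6 : δ * b w w = δ * (c ^ 2 * b u0 u0) + δ * b ξ ξ := by
      rw [hBsplit]; ring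
    have h3 : (lam2 - lam0) * b ξ ξ = 3 * (δ * b ξ ξ) := by rw [hδdef]; ring
    have h7 : δ * (2 * b ξ ξ) < δ * (c ^ 2 * b u0 u0) := by linarith [hmain, h6, h3]
    have hQlt : b ξ ξ < (1 / 2) * (c ^ 2 * b u0 u0) := by
      have := (mul_lt_mul_iff_right₀ hδpos).mp h7
      linarith
    have hc : c ≠ 0 := by
      intro hc0
      rw [hc0] at hQlt
      simp at hQlt
      linarith
    exact ⟨c, hc, hbw0, hQlt⟩
  -- suppose lam ≠ μ; then b u v = 0
  by_contra hne
  have h1 := hequ v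
  have h2 := heqv u
  rw [real_inner_comm u v, ha_symm v u, hb_symm v u] at h2
  have hbuv : b u v = 0 := by
    have : (lam - μ) * b u v = 0 := by linarith
    rcases mul_eq_zero.mp this with h | h
    · exact absurd (by linarith : lam = μ) hne
    · exact h
  obtain ⟨c, hc, hbu, hQu⟩ := key lam u hu0' hequ hl
  obtain ⟨d, hd, hbv, hQv⟩ := key μ v hv0' heqv hm
  set ξu : X := u - c • u0 with hξu
  set ξv : X := v - d • u0 with hξv
  have hcross : b ξu ξv = - (c * d * b u0 u0) := by
    simp only [hξu, hξv, map_sub, map_smul, LinearMap.sub_apply, LinearMap.smul_apply,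
      smul_eq_mul]
    rw [hbuv, hb_symm u0 v, hbv, hbu]
    ring
  have hcs := hb_cs ξu ξv
  rw [hcross] at hcs
  have hQu0 : 0 ≤ b ξu ξu := hb_nonneg ξu
  have hQv0 : 0 ≤ b ξv ξv := hb_nonneg ξv
  have hPu : 0 < c ^ 2 * b u0 u0 := by positivity
  have hPv : 0 < d ^ 2 * b u0 u0 := by positivity
  have h1 : b ξu ξu * b ξv ξv
      ≤ ((1 / 2) * (c ^ 2 * b u0 u0)) * ((1 / 2) * (d ^ 2 * b u0 u0)) :=
    mul_le_mul hQu.le hQv.le hQv0 (by positivity)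
  have hne0 : c * d * b u0 u0 ≠ 0 := mul_ne_zero (mul_ne_zero hc hd) (ne_of_gt hb0)
  have hpos : 0 < (c * d * b u0 u0) ^ 2 := by positivity
  rw [neg_sq] at hcs
  linarith [hcs, h1, hpos]
end

section
/- There exist s > 0 and δ > 0 such that for every ε ∈ (0, s) and every λ ∈ ℝ with |λ − λ_0| < δ, the linear subspace {u ∈ X : ε⟨u, φ⟩_X + a(u, φ) = λ b(u, φ) for all φ ∈ X} has dimension at most one. -/
open scoped RealInnerProductSpace
open Filter

/-- The eigenspace `{u : X | ∀ φ, ε⟪u, φ⟫_X + a(u, φ) = λ b(u, φ)}` of the ε-perturbed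
problem, as a linear subspace of `X`. -/
def eigSpace {X : Type*} [NormedAddCommGroup X] [InnerProductSpace ℝ X]
    (a b : X →ₗ[ℝ] X →ₗ[ℝ] ℝ) (ε lam : ℝ) : Submodule ℝ X where
  carrier := {u : X | ∀ φ : X, ε * ⟪u, φ⟫ + a u φ = lam * b u φ}
  add_mem' := by
    intro u v hu hv φ
    simp only [inner_add_left, map_add, LinearMap.add_apply]
    linear_combination hu φ + hv φ
  zero_mem' := by
    intro φ
    simp
  smul_mem' := by
    intro c u hu φ
    simp only [real_inner_smul_left, map_smul, LinearMap.smul_apply, smul_eq_mul]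
    linear_combination c * hu φ

/-- The simplicity step of Theorem 1.2: for all small `ε > 0` and all `λ` near `λ₀`,
the eigenspace of the ε-perturbed problem has dimension at most one. -/
theorem perturbed_eigenspace_simple
    {X : Type*} [NormedAddCommGroup X] [InnerProductSpace ℝ X] [CompleteSpace X]
    (a b : X →ₗ[ℝ] X →ₗ[ℝ] ℝ)
    (ha_symm : ∀ u v : X, a u v = a v u)
    (hb_symm : ∀ u v : X, b u v = b v u)
    (ha_cont : Continuous fun p : X × X => a p.1 p.2)
    (hb_cont : Continuous fun p : X × X => b p.1 p.2)
    (ha_nonneg : ∀ u : X, 0 ≤ a u u)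
    (hb_posdef : ∀ u : X, u ≠ 0 → 0 < b u u)
    (hb_compact : ∀ (v : ℕ → X) (w : X),
        (∀ φ : X, Filter.Tendsto (fun k => ⟪v k, φ⟫) Filter.atTop (nhds ⟪w, φ⟫)) →
        Filter.Tendsto (fun k => b (v k - w) (v k - w)) Filter.atTop (nhds 0))
    (lam0 : ℝ) (hlam0 : 0 < lam0) (u0 : X) (hu0 : ‖u0‖ = 1)
    (h_eig0 : ∀ φ : X, a u0 φ = lam0 * b u0 φ)
    (h_rayleigh : ∀ u : X, lam0 * b u u ≤ a u u)
    (lam2 : ℝ) (hlam2 : lam0 < lam2)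
    (h_gap : ∀ ξ : X, a ξ u0 = 0 → lam2 * b ξ ξ ≤ a ξ ξ)
    : ∃ s : ℝ, 0 < s ∧ ∃ δ : ℝ, 0 < δ ∧ ∀ ε : ℝ, 0 < ε → ε < s →
      ∀ lam : ℝ, |lam - lam0| < δ →
        Module.rank ℝ ↥(eigSpace a b ε lam) ≤ 1 := by
  refine ⟨1, one_pos, lam2 - lam0, by linarith, fun ε hε _ lam hlam => ?_⟩
  have hlam' : lam < lam2 := by
    have := abs_lt.mp hlam
    linarith [this.2]
  have hb_nn : ∀ u : X, 0 ≤ b u u := by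
    intro u
    by_cases hu : u = 0
    · simp [hu]
    · exact (hb_posdef u hu).le
  -- the functional u ↦ a(u, u₀) is injective on the eigenspace
  have hinj : Function.Injective ((a.flip u0).comp (eigSpace a b ε lam).subtype) := by
    rw [← LinearMap.ker_eq_bot, LinearMap.ker_eq_bot']
    intro m hm
    have hmem : (m : X) ∈ eigSpace a b ε lam := m.2
    have hau0 : a (m : X) u0 = 0 := hm
    have heq : ε * ⟪(m : X), (m : X)⟫ + a (m : X) (m : X) = lam * b (m : X) (m : X) :=
      hmem (m : X)
    have hgap := h_gap (m : X) hau0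
    have hnorm : ε * ⟪(m : X), (m : X)⟫ ≤ (lam - lam2) * b (m : X) (m : X) := by nlinarith
    have h2 : (lam - lam2) * b (m : X) (m : X) ≤ 0 :=
      mul_nonpos_of_nonpos_of_nonneg (by linarith) (hb_nn _)
    have h3 : ε * ⟪(m : X), (m : X)⟫ ≤ 0 := le_trans hnorm h2
    have h4 : ⟪(m : X), (m : X)⟫ ≤ 0 := nonpos_of_mul_nonpos_right h3 hε
    have h5 : (m : X) = 0 := by
      have := real_inner_self_nonneg (x := (m : X))
      have : ⟪(m : X), (m : X)⟫ = 0 := le_antisymm h4 this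
      exact inner_self_eq_zero.mp this
    exact Subtype.ext h5
  have := LinearMap.lift_rank_le_of_injective _ hinj
  rw [Module.rank_self] at this
  simpa using this
end

section
/- Let ε > 0 and let (λ_ε, u_ε) be an eigenpair of the ε-perturbed problem. Define α := ⟨u_ε, u_0⟩_X, η := u_ε − α u_0, and β := a(η, u_0) / a(u_0, u_0). Then ε α = (λ_ε − λ_0)(α + β) b(u_0, u_0). -/
open scoped RealInnerProductSpace
open Filter

/-- The identity (2.27)–(2.28): for an eigenpair `(λ_ε, u_ε)` of the ε-perturbed problem,
with `α = ⟪u_ε, u₀⟫_X`, `η = u_ε − α u₀` and `β = a(η, u₀)/a(u₀, u₀)`, one has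
`ε α = (λ_ε − λ₀)(α + β) b(u₀, u₀)`. -/
theorem perturbed_eigenvalue_identity
    {X : Type*} [NormedAddCommGroup X] [InnerProductSpace ℝ X] [CompleteSpace X]
    (a b : X →ₗ[ℝ] X →ₗ[ℝ] ℝ)
    (ha_symm : ∀ u v : X, a u v = a v u)
    (hb_symm : ∀ u v : X, b u v = b v u)
    (ha_cont : Continuous fun p : X × X => a p.1 p.2)
    (hb_cont : Continuous fun p : X × X => b p.1 p.2)
    (ha_nonneg : ∀ u : X, 0 ≤ a u u)
    (hb_posdef : ∀ u : X, u ≠ 0 → 0 < b u u)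
    (hb_compact : ∀ (v : ℕ → X) (w : X),
        (∀ φ : X, Filter.Tendsto (fun k => ⟪v k, φ⟫) Filter.atTop (nhds ⟪w, φ⟫)) →
        Filter.Tendsto (fun k => b (v k - w) (v k - w)) Filter.atTop (nhds 0))
    (lam0 : ℝ) (hlam0 : 0 < lam0) (u0 : X) (hu0 : ‖u0‖ = 1)
    (h_eig0 : ∀ φ : X, a u0 φ = lam0 * b u0 φ)
    (h_rayleigh : ∀ u : X, lam0 * b u u ≤ a u u)
    (lam2 : ℝ) (hlam2 : lam0 < lam2)
    (h_gap : ∀ ξ : X, a ξ u0 = 0 → lam2 * b ξ ξ ≤ a ξ ξ)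
    (ε : ℝ) (hε : 0 < ε) (lamε : ℝ) (uε : X) (huε : uε ≠ 0)
    (h_pair : ∀ φ : X, ε * ⟪uε, φ⟫ + a uε φ = lamε * b uε φ)
    (α : ℝ) (hα : α = ⟪uε, u0⟫)
    (η : X) (hη : η = uε - α • u0)
    (β : ℝ) (hβ : β = a η u0 / a u0 u0) :
    ε * α = (lamε - lam0) * (α + β) * b u0 u0 := by
  have hu0ne : u0 ≠ 0 := by
    intro h; rw [h, norm_zero] at hu0; norm_num at hu0
  have hb0 : 0 < b u0 u0 := hb_posdef u0 hu0ne
  have ha00 : a u0 u0 = lam0 * b u0 u0 := h_eig0 u0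
  have ha00ne : a u0 u0 ≠ 0 := by rw [ha00]; positivity
  have haη : a η u0 = lam0 * b η u0 := by
    rw [ha_symm η u0, h_eig0 η, hb_symm u0 η]
  have hβ' : β * b u0 u0 = b η u0 := by
    rw [hβ, ha00, haη]
    field_simp
  have huε : uε = α • u0 + η := by rw [hη]; abel
  have hbu : b uε u0 = α * b u0 u0 + b η u0 := by
    rw [huε]; simp [map_add, map_smul]
  have hau : a uε u0 = lam0 * b uε u0 := by
    rw [ha_symm uε u0, h_eig0 uε, hb_symm u0 uε]
  have hp := h_pair u0
  rw [← hα] at hp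
  rw [hau, hbu] at hp

  linear_combination hp - (lamε - lam0) * hβ'
end

section
/- Let ε > 0 and let (λ_ε, u_ε) be an eigenpair of the ε-perturbed problem with ‖u_ε‖_X = 1 and λ_ε ≤ λ⁽²⁾. Define α := ⟨u_ε, u_0⟩_X, η := u_ε − α u_0, and β := a(η, u_0) / a(u_0, u_0). Then ‖η‖_X² ≤ α β. -/
open scoped RealInnerProductSpace
open Filter

/-- The estimate (2.39): for a normalized eigenpair `(λ_ε, u_ε)` of the ε-perturbed problem
with `λ_ε ≤ λ⁽²⁾`, writing `α = ⟪u_ε, u₀⟫_X`, `η = u_ε − α u₀` and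
`β = a(η, u₀)/a(u₀, u₀)`, one has `‖η‖² ≤ α β`. -/
theorem perturbed_remainder_estimate
    {X : Type*} [NormedAddCommGroup X] [InnerProductSpace ℝ X] [CompleteSpace X]
    (a b : X →ₗ[ℝ] X →ₗ[ℝ] ℝ)
    (ha_symm : ∀ u v : X, a u v = a v u)
    (hb_symm : ∀ u v : X, b u v = b v u)
    (ha_cont : Continuous fun p : X × X => a p.1 p.2)
    (hb_cont : Continuous fun p : X × X => b p.1 p.2)
    (ha_nonneg : ∀ u : X, 0 ≤ a u u)
    (hb_posdef : ∀ u : X, u ≠ 0 → 0 < b u u)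
    (hb_compact : ∀ (v : ℕ → X) (w : X),
        (∀ φ : X, Filter.Tendsto (fun k => ⟪v k, φ⟫) Filter.atTop (nhds ⟪w, φ⟫)) →
        Filter.Tendsto (fun k => b (v k - w) (v k - w)) Filter.atTop (nhds 0))
    (lam0 : ℝ) (hlam0 : 0 < lam0) (u0 : X) (hu0 : ‖u0‖ = 1)
    (h_eig0 : ∀ φ : X, a u0 φ = lam0 * b u0 φ)
    (h_rayleigh : ∀ u : X, lam0 * b u u ≤ a u u)
    (lam2 : ℝ) (hlam2 : lam0 < lam2)
    (h_gap : ∀ ξ : X, a ξ u0 = 0 → lam2 * b ξ ξ ≤ a ξ ξ)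
    (ε : ℝ) (hε : 0 < ε) (lamε : ℝ) (uε : X) (huε : uε ≠ 0)
    (h_pair : ∀ φ : X, ε * ⟪uε, φ⟫ + a uε φ = lamε * b uε φ)
    (h_norm : ‖uε‖ = 1) (h_le : lamε ≤ lam2)
    (α : ℝ) (hα : α = ⟪uε, u0⟫)
    (η : X) (hη : η = uε - α • u0)
    (β : ℝ) (hβ : β = a η u0 / a u0 u0) :
    ‖η‖ ^ 2 ≤ α * β := by
  have hu0ne : u0 ≠ 0 := by
    intro h; rw [h, norm_zero] at hu0; norm_num at hu0
  have huεne : uε ≠ 0 := huε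
  have hB00 : 0 < b u0 u0 := hb_posdef u0 hu0ne
  have hBε : 0 < b uε uε := hb_posdef uε huεne
  have hA00 : a u0 u0 = lam0 * b u0 u0 := h_eig0 u0
  have hA00pos : 0 < a u0 u0 := by rw [hA00]; positivity
  have huεeq : uε = η + α • u0 := by rw [hη]; abel
  -- eigen relation in first slot
  have hEig : ∀ v : X, a v u0 = lam0 * b v u0 := fun v => by
    rw [ha_symm, h_eig0, hb_symm]
  -- inner product facts
  have hinn0 : ⟪u0, u0⟫ = (1:ℝ) := by
    rw [real_inner_self_eq_norm_sq, hu0]; norm_num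
  have hinnε : ⟪uε, uε⟫ = (1:ℝ) := by
    rw [real_inner_self_eq_norm_sq, h_norm]; norm_num
  have hηu0 : ⟪η, u0⟫ = 0 := by
    rw [hη, inner_sub_left, real_inner_smul_left, hinn0, hα]; ring
  have hu0η : ⟪u0, η⟫ = 0 := by rw [real_inner_comm]; exact hηu0
  have hN : ⟪uε, η⟫ = ‖η‖ ^ 2 := by
    rw [huεeq, inner_add_left, real_inner_smul_left, hu0η, real_inner_self_eq_norm_sq]
    ring
  set N := ‖η‖ ^ 2 with hNdef
  have hNnonneg : 0 ≤ N := by positivity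
  -- bilinear expansions
  have hbexp : ∀ v : X, b uε v = b η v + α * b u0 v := by
    intro v
    rw [huεeq, map_add, LinearMap.add_apply, map_smul, LinearMap.smul_apply, smul_eq_mul]
  have haexp : ∀ v : X, a uε v = a η v + α * a u0 v := by
    intro v
    rw [huεeq, map_add, LinearMap.add_apply, map_smul, LinearMap.smul_apply, smul_eq_mul]
  -- beta relations
  have hβa : a η u0 = β * a u0 u0 := by
    rw [hβ]; field_simp
  have hβb : b η u0 = β * b u0 u0 := by
    have h1 : a η u0 = lam0 * b η u0 := hEig η
    have h2 : lam0 * b η u0 = lam0 * (β * b u0 u0) := by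
      rw [← h1, hβa, hA00]; ring
    exact mul_left_cancel₀ (ne_of_gt hlam0) h2
  -- lamε > lam0
  have hpε : ε * 1 + a uε uε = lamε * b uε uε := by rw [← hinnε]; exact h_pair uε
  have hray : lam0 * b uε uε ≤ a uε uε := h_rayleigh uε
  have hlamε : lam0 < lamε := by nlinarith
  -- identity (1): test with u0
  have hbεu0 : b uε u0 = (α + β) * b u0 u0 := by
    rw [hbexp, hβb]; rw [hb_symm u0 u0]; ring
  have h1 : ε * α = (lamε - lam0) * ((α + β) * b u0 u0) := by
    have hp := h_pair u0
    rw [← hα, hEig uε, hbεu0] at hp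
    linear_combination hp
  -- identity (2): test with η
  have hau0η : a u0 η = lam0 * (β * b u0 u0) := by
    rw [h_eig0, hb_symm, hβb]
  have hbu0η : b u0 η = β * b u0 u0 := by rw [hb_symm, hβb]
  have h2 : ε * N + a η η - lamε * b η η = (lamε - lam0) * (α * β * b u0 u0) := by
    have hp := h_pair η
    rw [hN, haexp, hbexp, hau0η, hbu0η] at hp
    linear_combination hp
  -- identity (3): spectral gap for ξ = η - β u0
  set ξ := η - β • u0 with hξdef
  have hξu0 : a ξ u0 = 0 := by
    rw [hξdef, map_sub, LinearMap.sub_apply, map_smul, LinearMap.smul_apply,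
      smul_eq_mul, hβa]
    ring
  have hgapξ : lam2 * b ξ ξ ≤ a ξ ξ := h_gap ξ hξu0
  have hbξ : 0 ≤ b ξ ξ := by
    rcases eq_or_ne ξ 0 with h | h
    · simp [h]
    · exact le_of_lt (hb_posdef ξ h)
  have haξ : a ξ ξ = a η η - β ^ 2 * a u0 u0 := by
    rw [hξdef]
    simp only [map_sub, LinearMap.sub_apply, map_smul, LinearMap.smul_apply, smul_eq_mul]
    rw [ha_symm u0 η, hβa]
    ring
  have hbξξ : b ξ ξ = b η η - β ^ 2 * b u0 u0 := by
    rw [hξdef]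
    simp only [map_sub, LinearMap.sub_apply, map_smul, LinearMap.smul_apply, smul_eq_mul]
    rw [hb_symm u0 η, hβb]
    ring
  -- combine: a η η - lamε * b η η ≥ -β² (lamε - lam0) * b u0 u0
  have h3 : -(β ^ 2 * (lamε - lam0) * b u0 u0) ≤ a η η - lamε * b η η := by
    have hle2 : lamε * b ξ ξ ≤ lam2 * b ξ ξ := mul_le_mul_of_nonneg_right h_le hbξ
    have hpos : 0 ≤ a ξ ξ - lamε * b ξ ξ := by linarith
    have heq : a η η - lamε * b η η
        = (a ξ ξ - lamε * b ξ ξ) - β ^ 2 * (lamε - lam0) * b u0 u0 := by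
      rw [haξ, hbξξ, hA00]; ring
    linarith
  -- conclude
  have h1b : ε * α * β = (lamε - lam0) * ((α + β) * b u0 u0) * β := by
    linear_combination β * h1
  have hfin : ε * N ≤ ε * (α * β) := by linarith [h1b, h2, h3]
  have := (mul_le_mul_iff_right₀ hε).mp hfin
  linarith
end

section
/- Let ε > 0 and let (λ_ε, u_ε) be an eigenpair of the ε-perturbed problem with λ_ε ≤ λ⁽²⁾. Define α := ⟨u_ε, u_0⟩_X, γ := a(u_ε, u_0) / a(u_0, u_0), and β := γ − α. If γ > 0, then β ≥ 0, and β = 0 if and only if u_ε = γ u_0. -/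
open scoped RealInnerProductSpace
open Filter

/-- The sign claim (2.34): for an eigenpair `(λ_ε, u_ε)` of the ε-perturbed problem with
`λ_ε ≤ λ⁽²⁾`, writing `α = ⟪u_ε, u₀⟫_X`, `γ = a(u_ε, u₀)/a(u₀, u₀)` and `β = γ − α`,
if `γ > 0` then `β ≥ 0`, with `β = 0` exactly in the exceptional case `u_ε = γ u₀`. -/
theorem perturbed_beta_nonneg
    {X : Type*} [NormedAddCommGroup X] [InnerProductSpace ℝ X] [CompleteSpace X]
    (a b : X →ₗ[ℝ] X →ₗ[ℝ] ℝ)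
    (ha_symm : ∀ u v : X, a u v = a v u)
    (hb_symm : ∀ u v : X, b u v = b v u)
    (ha_cont : Continuous fun p : X × X => a p.1 p.2)
    (hb_cont : Continuous fun p : X × X => b p.1 p.2)
    (ha_nonneg : ∀ u : X, 0 ≤ a u u)
    (hb_posdef : ∀ u : X, u ≠ 0 → 0 < b u u)
    (hb_compact : ∀ (v : ℕ → X) (w : X),
        (∀ φ : X, Filter.Tendsto (fun k => ⟪v k, φ⟫) Filter.atTop (nhds ⟪w, φ⟫)) →
        Filter.Tendsto (fun k => b (v k - w) (v k - w)) Filter.atTop (nhds 0))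
    (lam0 : ℝ) (hlam0 : 0 < lam0) (u0 : X) (hu0 : ‖u0‖ = 1)
    (h_eig0 : ∀ φ : X, a u0 φ = lam0 * b u0 φ)
    (h_rayleigh : ∀ u : X, lam0 * b u u ≤ a u u)
    (lam2 : ℝ) (hlam2 : lam0 < lam2)
    (h_gap : ∀ ξ : X, a ξ u0 = 0 → lam2 * b ξ ξ ≤ a ξ ξ)
    (ε : ℝ) (hε : 0 < ε) (lamε : ℝ) (uε : X) (huε : uε ≠ 0)
    (h_pair : ∀ φ : X, ε * ⟪uε, φ⟫ + a uε φ = lamε * b uε φ)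
    (h_le : lamε ≤ lam2)
    (α : ℝ) (hα : α = ⟪uε, u0⟫)
    (γ : ℝ) (hγ : γ = a uε u0 / a u0 u0)
    (β : ℝ) (hβ : β = γ - α)
    (hγ_pos : 0 < γ) :
    0 ≤ β ∧ (β = 0 ↔ uε = γ • u0) := by
  have hu0ne : u0 ≠ 0 := by
    intro h; rw [h, norm_zero] at hu0; norm_num at hu0
  have hb00 : 0 < b u0 u0 := hb_posdef u0 hu0ne
  have ha00 : a u0 u0 = lam0 * b u0 u0 := h_eig0 u0
  have ha00pos : 0 < a u0 u0 := by rw [ha00]; positivity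
  have hauεu0 : a uε u0 = γ * a u0 u0 := by
    rw [hγ]; field_simp
  set ξ : X := uε - γ • u0 with hξdef
  have huεeq : uε = ξ + γ • u0 := by rw [hξdef]; abel
  have haξ : a ξ u0 = 0 := by
    simp only [hξdef, map_sub, map_smul, LinearMap.sub_apply, LinearMap.smul_apply,
      smul_eq_mul, hauεu0]
    ring
  have hbuεu0 : b uε u0 = γ * b u0 u0 := by
    have h1 : a uε u0 = lam0 * b uε u0 := by
      rw [ha_symm, h_eig0, hb_symm]
    have := hauεu0
    rw [h1, ha00] at this
    have hl : lam0 ≠ 0 := ne_of_gt hlam0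
    nlinarith [this]
  have hbξ : b ξ u0 = 0 := by
    simp only [hξdef, map_sub, map_smul, LinearMap.sub_apply, LinearMap.smul_apply,
      smul_eq_mul, hbuεu0]
    ring
  have haux : a uε ξ = a ξ ξ := by
    rw [huεeq]
    simp only [map_add, map_smul, LinearMap.add_apply, LinearMap.smul_apply, smul_eq_mul,
      ha_symm u0 ξ, haξ]
    ring
  have hbux : b uε ξ = b ξ ξ := by
    rw [huεeq]
    simp only [map_add, map_smul, LinearMap.add_apply, LinearMap.smul_apply, smul_eq_mul,
      hb_symm u0 ξ, hbξ]
    ring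
  have hinner : ⟪uε, ξ⟫ = ⟪ξ, ξ⟫ - γ * β := by
    have h1 : ⟪u0, ξ⟫ = α - γ := by
      rw [hξdef, inner_sub_right, real_inner_smul_right, real_inner_self_eq_norm_sq, hu0,
        real_inner_comm, ← hα]
      ring
    rw [huεeq, inner_add_left, real_inner_smul_left, h1, hβ]
    ring
  have hbξξ : 0 ≤ b ξ ξ := by
    rcases eq_or_ne ξ 0 with h | h
    · simp [h]
    · exact (hb_posdef ξ h).le
  have hgap := h_gap ξ haξ
  have hpair := h_pair ξ
  rw [haux, hbux, hinner] at hpair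
  have hle2 : lamε * b ξ ξ ≤ a ξ ξ :=
    le_trans (mul_le_mul_of_nonneg_right h_le hbξξ) hgap
  have hkey : ⟪ξ, ξ⟫ ≤ γ * β := by nlinarith
  have hinner_nonneg : (0:ℝ) ≤ ⟪ξ, ξ⟫ := real_inner_self_nonneg
  have hβnn : 0 ≤ β := by nlinarith
  refine ⟨hβnn, ?_, ?_⟩
  · intro h0
    have : ⟪ξ, ξ⟫ = 0 := le_antisymm (by nlinarith) hinner_nonneg
    have hz : ξ = 0 := by
      rwa [inner_self_eq_zero] at this
    rw [huεeq, hz, zero_add]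
  · intro h
    have : α = γ := by
      rw [hα, h, real_inner_smul_left, real_inner_self_eq_norm_sq, hu0]
      simp
    rw [hβ, this, sub_self]
end

section
/- There exists s > 0 such that for every ε ∈ (0, s) the following hold: (i) there is an eigenpair (λ_ε, u_ε) of the ε-perturbed problem with ‖u_ε‖_X = 1, a(u_ε, u_0) ≥ 0, and λ_ε = inf{ (ε‖u‖_X² + a(u, u)) / b(u, u) : u ∈ X, u ≠ 0 }; (ii) λ_0 < λ_ε ≤ λ_0 + ε / b(u_0, u_0); (iii) the subspace {u ∈ X : ε⟨u, φ⟩_X + a(u, φ) = λ_ε b(u, φ) for all φ ∈ X} is one-dimensional; (iv) there is no v ∈ X with ε⟨v, φ⟩_X + a(v, φ) − λ_ε b(v, φ) = ⟨u_ε, φ⟩_X for all φ ∈ X; (v) there is δ > 0, independent of ε, such that every eigenpair (μ, v) of the ε-perturbed problem with |μ − λ_0| < δ has μ = λ_ε; and (vi) λ_ε → λ_0 and u_ε → u_0 strongly in X as ε → 0⁺. -/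
open scoped RealInnerProductSpace
open Filter

section AuxLemmas

variable {X : Type*} [NormedAddCommGroup X] [InnerProductSpace ℝ X]

lemma pp_quad_zero {L C : ℝ} (h : ∀ t : ℝ, 0 ≤ 2 * t * L + t ^ 2 * C) : L = 0 := by
  by_contra hL
  have hL2 : 0 < L ^ 2 := lt_of_le_of_ne (sq_nonneg L) (Ne.symm (pow_ne_zero 2 hL))
  set d : ℝ := 1 / (|C| + 1) with hd
  have hd0 : 0 < d := by positivity
  have hdC : d * C < 2 := by
    have h1 : d * C ≤ d * |C| := mul_le_mul_of_nonneg_left (le_abs_self C) hd0.le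
    have h2 : d * |C| < 1 := by
      rw [hd, div_mul_eq_mul_div, one_mul, div_lt_one (by positivity)]
      linarith [abs_nonneg C]
    linarith
  have hcon := h (-L * d)
  nlinarith [mul_pos hd0 hL2]

lemma pp_bilin_cs (p : X →ₗ[ℝ] X →ₗ[ℝ] ℝ) (hsymm : ∀ u v, p u v = p v u)
    (hpos : ∀ u, 0 ≤ p u u) (u v : X) : (p u v) ^ 2 ≤ p u u * p v v := by
  by_cases hv : p v v = 0
  · have key : ∀ t : ℝ, 0 ≤ p u u + 2 * t * p u v := by
      intro t
      have ht := hpos (u + t • v)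
      simp only [map_add, map_smul, LinearMap.add_apply, LinearMap.smul_apply,
        smul_eq_mul] at ht
      rw [hsymm v u, hv] at ht
      linarith
    have huv : p u v = 0 := by
      by_contra huv
      have h2 : (2 : ℝ) * p u v ≠ 0 := by
        intro h; apply huv; linarith
      have hk := key (-(p u u + 1) / (2 * p u v))
      have he : 2 * (-(p u u + 1) / (2 * p u v)) * p u v = -(p u u + 1) := by
        field_simp
      rw [he] at hk
      linarith
    rw [huv, hv]
    simp [hpos u]
  · have hvpos : 0 < p v v := lt_of_le_of_ne (hpos v) (Ne.symm hv)
    have h1 := hpos ((p v v) • u - (p u v) • v)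
    simp only [map_sub, map_smul, LinearMap.sub_apply, LinearMap.smul_apply,
      smul_eq_mul] at h1
    rw [hsymm v u] at h1
    nlinarith [h1, hvpos]

lemma pp_bilin_bound (p : X →ₗ[ℝ] X →ₗ[ℝ] ℝ)
    (hcont : Continuous fun q : X × X => p q.1 q.2) :
    ∃ C : ℝ, 0 < C ∧ ∀ u v : X, |p u v| ≤ C * ‖u‖ * ‖v‖ := by
  have hten : Filter.Tendsto (fun q : X × X => p q.1 q.2) (nhds (0, 0)) (nhds 0) := by
    have h := hcont.tendsto ((0 : X), (0 : X))
    simpa using h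
  have h1 := Metric.tendsto_nhds.mp hten 1 one_pos
  rw [Metric.eventually_nhds_iff] at h1
  obtain ⟨δ, hδ, hball⟩ := h1
  refine ⟨4 / δ ^ 2 + 1, by positivity, fun u v => ?_⟩
  by_cases hu : u = 0
  · simp [hu]
  by_cases hvz : v = 0
  · simp [hvz]
  have hun : 0 < ‖u‖ := norm_pos_iff.mpr hu
  have hvn : 0 < ‖v‖ := norm_pos_iff.mpr hvz
  set u' : X := (δ / 2 / ‖u‖) • u with hu'
  set v' : X := (δ / 2 / ‖v‖) • v with hv'
  have hu'n : ‖u'‖ = δ / 2 := by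
    rw [hu', norm_smul, Real.norm_eq_abs, abs_of_pos (by positivity)]
    field_simp
  have hv'n : ‖v'‖ = δ / 2 := by
    rw [hv', norm_smul, Real.norm_eq_abs, abs_of_pos (by positivity)]
    field_simp
  have hdist : dist (u', v') ((0 : X), (0 : X)) < δ := by
    rw [Prod.dist_eq]
    simp only [dist_zero_right, hu'n, hv'n]
    rw [max_self]
    linarith
  have hb := hball hdist
  rw [dist_zero_right, Real.norm_eq_abs] at hb
  have hexp : p u' v' = (δ / 2 / ‖u‖) * ((δ / 2 / ‖v‖) * p u v) := by
    simp [hu', hv', LinearMap.map_smul₂, map_smul, smul_eq_mul]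
    ring
  rw [hexp] at hb
  rw [abs_mul, abs_mul, abs_of_pos (show (0:ℝ) < δ / 2 / ‖u‖ by positivity),
    abs_of_pos (show (0:ℝ) < δ / 2 / ‖v‖ by positivity)] at hb
  field_simp at hb
  have key : |p u v| ≤ 4 / δ ^ 2 * ‖u‖ * ‖v‖ := by
    rw [div_mul_eq_mul_div, div_mul_eq_mul_div, le_div_iff₀ (by positivity : (0:ℝ) < δ ^ 2)]
    nlinarith [hb, abs_nonneg (p u v), hδ, hun, hvn]
  have h2 : 4 / δ ^ 2 * ‖u‖ * ‖v‖ ≤ (4 / δ ^ 2 + 1) * ‖u‖ * ‖v‖ := by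
    nlinarith [mul_pos hun hvn]
  linarith

lemma pp_bilin_riesz [CompleteSpace X] (p : X →ₗ[ℝ] X →ₗ[ℝ] ℝ) {C : ℝ}
    (hC : ∀ u v : X, |p u v| ≤ C * ‖u‖ * ‖v‖) (y : X) :
    ∃ w : X, ∀ z : X, p z y = ⟪w, z⟫ := by
  set f : X →L[ℝ] ℝ := LinearMap.mkContinuous (p.flip y) (C * ‖y‖) (fun z => by
    rw [Real.norm_eq_abs]
    calc |p.flip y z| = |p z y| := by rw [LinearMap.flip_apply]
      _ ≤ C * ‖z‖ * ‖y‖ := hC z y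
      _ = C * ‖y‖ * ‖z‖ := by ring) with hf
  refine ⟨(InnerProductSpace.toDual ℝ X).symm f, fun z => ?_⟩
  rw [InnerProductSpace.toDual_symm_apply]
  simp [hf, LinearMap.mkContinuous_apply, LinearMap.flip_apply]

lemma pp_bilin_weak_tendsto [CompleteSpace X] (p : X →ₗ[ℝ] X →ₗ[ℝ] ℝ) {C : ℝ}
    (hC : ∀ u v : X, |p u v| ≤ C * ‖u‖ * ‖v‖)
    {v : ℕ → X} {w : X}
    (hw : ∀ y : X, Tendsto (fun k => ⟪v k, y⟫) atTop (nhds ⟪w, y⟫)) (y : X) :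
    Tendsto (fun k => p (v k) y) atTop (nhds (p w y)) := by
  obtain ⟨z, hz⟩ := pp_bilin_riesz p hC y
  have h := hw z
  have heq : ∀ x : X, p x y = ⟪x, z⟫ := fun x => by rw [hz x, real_inner_comm]
  rw [heq w] at *
  exact h.congr fun k => (heq (v k)).symm

set_option maxHeartbeats 1000000 in
lemma pp_weak_seq_compact [CompleteSpace X] (v : ℕ → X) (M : ℝ)
    (hv : ∀ k, ‖v k‖ ≤ M) :
    ∃ (w : X) (φ : ℕ → ℕ), StrictMono φ ∧
      ∀ y : X, Tendsto (fun k => ⟪v (φ k), y⟫) atTop (nhds ⟪w, y⟫) := by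
  classical
  have hM0 : 0 ≤ M := (norm_nonneg (v 0)).trans (hv 0)
  -- diagonal extraction via compactness of a product of intervals
  set F : ℕ → ℕ → ℝ := fun k j => ⟪v k, v j⟫ with hF
  set K : Set (ℕ → ℝ) := Set.univ.pi fun _ => Set.Icc (-(M * M)) (M * M) with hK
  have hKc : IsCompact K := isCompact_univ_pi fun _ => isCompact_Icc
  have hFK : ∀ k, F k ∈ K := by
    intro k
    rw [hK, Set.mem_univ_pi]
    intro j
    have h1 : |⟪v k, v j⟫| ≤ M * M := by
      calc |⟪v k, v j⟫| ≤ ‖v k‖ * ‖v j‖ := abs_real_inner_le_norm _ _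
        _ ≤ M * M := mul_le_mul (hv k) (hv j) (norm_nonneg _) hM0
    exact abs_le.mp h1
  obtain ⟨g, -, φ, hφ, hconv⟩ := hKc.tendsto_subseq hFK
  have hpt : ∀ j, Tendsto (fun k => ⟪v (φ k), v j⟫) atTop (nhds (g j)) := by
    intro j
    exact tendsto_pi_nhds.mp hconv j
  -- the set of good test vectors
  set G : Submodule ℝ X :=
    { carrier := {y : X | ∃ c : ℝ, Tendsto (fun k => ⟪v (φ k), y⟫) atTop (nhds c)}
      add_mem' := by
        rintro y z ⟨c, hc⟩ ⟨d, hd⟩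
        exact ⟨c + d, by simpa [inner_add_right] using hc.add hd⟩
      zero_mem' := ⟨0, by simp [tendsto_const_nhds]⟩
      smul_mem' := by
        rintro r y ⟨c, hc⟩
        exact ⟨r * c, by simpa [real_inner_smul_right] using hc.const_mul r⟩ } with hG
  have hGclosed : IsClosed (G : Set X) := by
    rw [← isSeqClosed_iff_isClosed]
    intro z y hz hzy
    -- each z n ∈ G, z n → y; show the sequence for y is Cauchy
    have hcauchy : CauchySeq fun k => ⟪v (φ k), y⟫ := by
      rw [Metric.cauchySeq_iff]
      intro δ hδ
      have hη : 0 < δ / (3 * (M + 1)) := by positivity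
      obtain ⟨n, hn⟩ : ∃ n, ‖z n - y‖ < δ / (3 * (M + 1)) := by
        have h := tendsto_iff_norm_sub_tendsto_zero.mp hzy
        obtain ⟨N0, hN0⟩ := Metric.tendsto_atTop.mp h (δ / (3 * (M + 1))) hη
        refine ⟨N0, ?_⟩
        have h1 := hN0 N0 le_rfl
        rwa [Real.dist_eq, sub_zero, abs_of_nonneg (norm_nonneg _)] at h1
      obtain ⟨c, hc⟩ := hz n
      obtain ⟨N, hN⟩ := Metric.cauchySeq_iff.mp hc.cauchySeq (δ / 3) (by positivity)
      refine ⟨N, fun m hm l hl => ?_⟩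
      have key : ∀ k, |⟪v (φ k), y⟫ - ⟪v (φ k), z n⟫| ≤ M * (δ / (3 * (M + 1))) := by
        intro k
        rw [← inner_sub_right]
        calc |⟪v (φ k), y - z n⟫| ≤ ‖v (φ k)‖ * ‖y - z n‖ := abs_real_inner_le_norm _ _
          _ ≤ M * (δ / (3 * (M + 1))) := by
              apply mul_le_mul (hv _) _ (norm_nonneg _) hM0
              rw [← norm_neg]
              simpa [neg_sub] using hn.le
      have hMd : M * (δ / (3 * (M + 1))) ≤ δ / 3 := by
        rw [mul_div_assoc']
        rw [div_le_div_iff₀ (by positivity) (by positivity)]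
        nlinarith [hδ.le, hM0]
      have h1 := key m
      have h2 := key l
      have h3 := hN m hm l hl
      rw [Real.dist_eq] at h3 ⊢
      have : ⟪v (φ m), y⟫ - ⟪v (φ l), y⟫ =
          (⟪v (φ m), y⟫ - ⟪v (φ m), z n⟫) + (⟪v (φ m), z n⟫ - ⟪v (φ l), z n⟫)
          + (⟪v (φ l), z n⟫ - ⟪v (φ l), y⟫) := by ring
      rw [this]
      calc |_ + _ + _| ≤ |⟪v (φ m), y⟫ - ⟪v (φ m), z n⟫| + |⟪v (φ m), z n⟫ - ⟪v (φ l), z n⟫|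
            + |⟪v (φ l), z n⟫ - ⟪v (φ l), y⟫| := by
              apply (abs_add_le _ _).trans
              gcongr
              exact abs_add_le _ _
        _ < δ := by
            have h2' : |⟪v (φ l), z n⟫ - ⟪v (φ l), y⟫| ≤ M * (δ / (3 * (M + 1))) := by
              rw [abs_sub_comm]; exact h2
            linarith
    obtain ⟨c, hc⟩ := cauchySeq_tendsto_of_complete hcauchy
    exact ⟨c, hc⟩
  -- the closure of the span of the range of v is contained in G
  set Y : Submodule ℝ X := (Submodule.span ℝ (Set.range v)).topologicalClosure with hY
  have hYG : Y ≤ G := by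
    apply Submodule.topologicalClosure_minimal
    · rw [Submodule.span_le]
      rintro x ⟨j, rfl⟩
      exact ⟨g j, hpt j⟩
    · exact hGclosed
  haveI : CompleteSpace Y := (Submodule.isClosed_topologicalClosure _).completeSpace_coe
  have hvY : ∀ k, v k ∈ Y := fun k =>
    (Submodule.le_topologicalClosure _) (Submodule.subset_span ⟨k, rfl⟩)
  have hdecomp : ∀ (y : X) (k : ℕ), ⟪v k, y⟫ = ⟪v k, (↑(Submodule.orthogonalProjectionOnto Y y) : X)⟫ := by
    intro y k
    have horth : y - ↑(Submodule.orthogonalProjectionOnto Y y) ∈ Yᗮ :=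
      Y.sub_starProjection_mem_orthogonal y
    have h0 : ⟪v k, y - ↑(Submodule.orthogonalProjectionOnto Y y)⟫ = 0 :=
      Submodule.inner_right_of_mem_orthogonal (hvY k) horth
    rw [inner_sub_right] at h0
    linarith
  have hconv2 : ∀ y : X, ∃ c : ℝ, Tendsto (fun k => ⟪v (φ k), y⟫) atTop (nhds c) := by
    intro y
    have hmem : (↑(Submodule.orthogonalProjectionOnto Y y) : X) ∈ G := hYG (Submodule.orthogonalProjectionOnto Y y).2
    obtain ⟨c, hc⟩ := hmem
    exact ⟨c, hc.congr fun k => (hdecomp y (φ k)).symm⟩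
  choose c hc using hconv2
  have hbound : ∀ y, |c y| ≤ M * ‖y‖ := by
    intro y
    apply le_of_tendsto (hc y).abs
    filter_upwards with k
    calc |⟪v (φ k), y⟫| ≤ ‖v (φ k)‖ * ‖y‖ := abs_real_inner_le_norm _ _
      _ ≤ M * ‖y‖ := by gcongr; exact hv _
  set F0 : X →ₗ[ℝ] ℝ :=
    { toFun := c
      map_add' := fun y z => tendsto_nhds_unique (hc (y + z))
        (by simpa [inner_add_right] using (hc y).add (hc z))
      map_smul' := fun r y => tendsto_nhds_unique (hc (r • y))
        (by simpa [real_inner_smul_right] using (hc y).const_mul r) } with hF0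
  set f : X →L[ℝ] ℝ := F0.mkContinuous M (fun y => by
    rw [Real.norm_eq_abs]; exact hbound y) with hf
  refine ⟨(InnerProductSpace.toDual ℝ X).symm f, φ, hφ, fun y => ?_⟩
  have : ⟪(InnerProductSpace.toDual ℝ X).symm f, y⟫ = c y := by
    rw [InnerProductSpace.toDual_symm_apply]
    simp [hf, hF0, LinearMap.mkContinuous_apply]
  rw [this]
  exact hc y

set_option maxHeartbeats 1000000 in
lemma pp_exists_eigen [CompleteSpace X] (a b : X →ₗ[ℝ] X →ₗ[ℝ] ℝ)
    (ha_symm : ∀ u v : X, a u v = a v u)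
    (hb_symm : ∀ u v : X, b u v = b v u)
    (hb_cont : Continuous fun p : X × X => b p.1 p.2)
    (ha_nonneg : ∀ u : X, 0 ≤ a u u)
    (hb_posdef : ∀ u : X, u ≠ 0 → 0 < b u u)
    (hb_compact : ∀ (v : ℕ → X) (w : X),
        (∀ φ : X, Filter.Tendsto (fun k => ⟪v k, φ⟫) Filter.atTop (nhds ⟪w, φ⟫)) →
        Filter.Tendsto (fun k => b (v k - w) (v k - w)) Filter.atTop (nhds 0))
    (lam0 : ℝ) (hlam0 : 0 < lam0) (u0 : X) (hu0 : ‖u0‖ = 1)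
    (h_rayleigh : ∀ u : X, lam0 * b u u ≤ a u u)
    {Ca : ℝ} (hCa : ∀ u v : X, |a u v| ≤ Ca * ‖u‖ * ‖v‖)
    (ε : ℝ) (hε : 0 < ε) :
    ∃ uu : X, ‖uu‖ = 1 ∧ 0 ≤ a uu u0 ∧
      ∀ φ : X, ε * ⟪uu, φ⟫ + a uu φ =
        (sInf {r : ℝ | ∃ w : X, w ≠ 0 ∧ r = (ε * ‖w‖ ^ 2 + a w w) / b w w}) * b uu φ := by
  classical
  have hu0ne : u0 ≠ 0 := by
    intro h
    rw [h, norm_zero] at hu0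
    exact one_ne_zero hu0.symm
  set S : Set ℝ := {r : ℝ | ∃ w : X, w ≠ 0 ∧ r = (ε * ‖w‖ ^ 2 + a w w) / b w w} with hS
  have hbdd : BddBelow S := by
    refine ⟨lam0, ?_⟩
    rintro r ⟨w, hw, rfl⟩
    rw [le_div_iff₀ (hb_posdef w hw)]
    have h1 := h_rayleigh w
    have h2 : 0 ≤ ε * ‖w‖ ^ 2 := by positivity
    linarith
  have hne : S.Nonempty := ⟨(ε * ‖u0‖ ^ 2 + a u0 u0) / b u0 u0, u0, hu0ne, rfl⟩
  set lam : ℝ := sInf S with hlam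
  have hlam_lb : lam0 ≤ lam := le_csInf hne (by
    rintro r ⟨w, hw, rfl⟩
    rw [le_div_iff₀ (hb_posdef w hw)]
    have h1 := h_rayleigh w
    have h2 : 0 ≤ ε * ‖w‖ ^ 2 := by positivity
    linarith)
  have hglobal : ∀ w : X, lam * b w w ≤ ε * ‖w‖ ^ 2 + a w w := by
    intro w
    by_cases hw : w = 0
    · simp [hw]
    · have hm : (ε * ‖w‖ ^ 2 + a w w) / b w w ∈ S := ⟨w, hw, rfl⟩
      have h1 := csInf_le hbdd hm
      rw [le_div_iff₀ (hb_posdef w hw)] at h1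
      exact h1
  -- minimizing sequence, normalized
  have hseq : ∀ n : ℕ, ∃ w : X, ‖w‖ = 1 ∧
      ε + a w w ≤ (lam + 1 / (n + 1)) * b w w := by
    intro n
    have hpos : (0:ℝ) < 1 / ((n:ℝ) + 1) := by positivity
    obtain ⟨r, hrS, hrlt⟩ := exists_lt_of_csInf_lt hne (by linarith : sInf S < lam + 1 / ((n:ℝ)+1))
    obtain ⟨w, hw, rfl⟩ := hrS
    have hwn : 0 < ‖w‖ := norm_pos_iff.mpr hw
    have h1 : ε * ‖w‖ ^ 2 + a w w < (lam + 1 / ((n:ℝ)+1)) * b w w := by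
      rw [div_lt_iff₀ (hb_posdef w hw)] at hrlt
      exact hrlt
    refine ⟨‖w‖⁻¹ • w, ?_, ?_⟩
    · rw [norm_smul, Real.norm_eq_abs, abs_of_pos (by positivity)]
      field_simp
    · have expa : a (‖w‖⁻¹ • w) (‖w‖⁻¹ • w) = ‖w‖⁻¹ ^ 2 * a w w := by
        simp [map_smul, LinearMap.smul_apply, smul_eq_mul]
        ring
      have expb : b (‖w‖⁻¹ • w) (‖w‖⁻¹ • w) = ‖w‖⁻¹ ^ 2 * b w w := by
        simp [map_smul, LinearMap.smul_apply, smul_eq_mul]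
        ring
      rw [expa, expb]
      have ht2 : ‖w‖⁻¹ ^ 2 * ‖w‖ ^ 2 = 1 := by
        field_simp
      have key := mul_le_mul_of_nonneg_left h1.le (by positivity : (0:ℝ) ≤ ‖w‖⁻¹ ^ 2)
      calc ε + ‖w‖⁻¹ ^ 2 * a w w = ‖w‖⁻¹ ^ 2 * (ε * ‖w‖ ^ 2 + a w w) := by
            linear_combination ε * ht2.symm
        _ ≤ ‖w‖⁻¹ ^ 2 * ((lam + 1 / ((n:ℝ)+1)) * b w w) := key
        _ = (lam + 1 / ((n:ℝ)+1)) * (‖w‖⁻¹ ^ 2 * b w w) := by ring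
  clear_value S lam
  choose vs hvs1 hvs2 using hseq
  obtain ⟨Cb, hCb0, hCb⟩ := pp_bilin_bound b hb_cont
  have hvsne : ∀ n, vs n ≠ 0 := by
    intro n h
    have h1 := hvs1 n
    rw [h, norm_zero] at h1
    exact one_ne_zero h1.symm
  have hlam1pos : 0 < lam + 1 := by linarith
  have hbv_lb : ∀ n, ε / (lam + 1) ≤ b (vs n) (vs n) := by
    intro n
    have h1 := hvs2 n
    have h2 : (1:ℝ) / ((n:ℝ)+1) ≤ 1 := by
      rw [div_le_one (by positivity)]
      have := Nat.cast_nonneg (α := ℝ) n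
      linarith
    have h3 : 0 < b (vs n) (vs n) := hb_posdef _ (hvsne n)
    have h4 : 0 ≤ a (vs n) (vs n) := ha_nonneg _
    rw [div_le_iff₀ hlam1pos]
    nlinarith
  obtain ⟨wst, φ, hφ, hweak⟩ := pp_weak_seq_compact vs 1 (fun n => (hvs1 n).le)
  -- limit of b (vs φ n) (vs φ n)
  have hexpvv : ∀ x : X, b x x = b (x - wst) (x - wst) + 2 * b x wst - b wst wst := by
    intro x
    simp only [map_sub, LinearMap.sub_apply]
    linear_combination hb_symm wst x
  have hdiff := hb_compact (fun k => vs (φ k)) wst (fun y => hweak y)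
  have hcross := pp_bilin_weak_tendsto b hCb hweak wst
  have hbvv : Tendsto (fun n => b (vs (φ n)) (vs (φ n))) atTop (nhds (b wst wst)) := by
    have h := (hdiff.add (hcross.const_mul 2)).sub
      (tendsto_const_nhds : Tendsto (fun _ : ℕ => b wst wst) atTop (nhds (b wst wst)))
    have h2 : (0 : ℝ) + 2 * b wst wst - b wst wst = b wst wst := by ring
    rw [h2] at h
    apply h.congr
    intro n
    rw [hexpvv (vs (φ n))]
  have hblim_lb : ε / (lam + 1) ≤ b wst wst :=
    ge_of_tendsto hbvv (Filter.Eventually.of_forall fun n => hbv_lb (φ n))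
  have hwstne : wst ≠ 0 := by
    intro h
    rw [h] at hblim_lb
    simp only [map_zero, LinearMap.zero_apply] at hblim_lb
    have : 0 < ε / (lam + 1) := by positivity
    linarith
  have hnorm_le : ‖wst‖ ≤ 1 := by
    have h1 := hweak wst
    have h2 : ∀ n, ⟪vs (φ n), wst⟫ ≤ ‖wst‖ := by
      intro n
      calc ⟪vs (φ n), wst⟫ ≤ ‖vs (φ n)‖ * ‖wst‖ := real_inner_le_norm _ _
        _ = ‖wst‖ := by rw [hvs1]; ring
    have h3 : ⟪wst, wst⟫ ≤ ‖wst‖ := le_of_tendsto h1 (Filter.Eventually.of_forall h2)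
    rw [real_inner_self_eq_norm_sq] at h3
    nlinarith [norm_nonneg wst]
  have haw := pp_bilin_weak_tendsto a hCa hweak wst
  have htend0 : Tendsto (fun n => 1 / ((φ n : ℝ) + 1)) atTop (nhds 0) := by
    refine squeeze_zero (fun n => by positivity) (fun n => ?_)
      tendsto_one_div_add_atTop_nhds_zero_nat
    apply one_div_le_one_div_of_le (by positivity)
    have hcast : ((n:ℝ)) ≤ ((φ n : ℝ)) := by exact_mod_cast hφ.le_apply
    linarith
  have hfinal : ε + a wst wst ≤ lam * b wst wst := by
    have hT : ∀ n, 0 ≤ (lam + 1 / ((φ n : ℝ) + 1)) * b (vs (φ n)) (vs (φ n)) - ε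
        - 2 * a (vs (φ n)) wst + a wst wst := by
      intro n
      have e1 := hvs2 (φ n)
      have e2 := ha_nonneg (vs (φ n) - wst)
      simp only [map_sub, LinearMap.sub_apply] at e2
      have e3 := ha_symm wst (vs (φ n))
      push_cast at e1
      linarith
    have hTend : Tendsto (fun n => (lam + 1 / ((φ n : ℝ) + 1)) * b (vs (φ n)) (vs (φ n)) - ε
        - 2 * a (vs (φ n)) wst + a wst wst) atTop
        (nhds ((lam + 0) * b wst wst - ε - 2 * a wst wst + a wst wst)) := by
      exact ((((htend0.const_add lam).mul hbvv).sub tendsto_const_nhds).sub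
        (haw.const_mul 2)).add tendsto_const_nhds
    have h0 := ge_of_tendsto hTend (Filter.Eventually.of_forall hT)
    linarith
  have hglob := hglobal wst
  have heps : ε * ‖wst‖ ^ 2 ≤ ε := by
    nlinarith [mul_nonneg (mul_nonneg hε.le (sub_nonneg.mpr hnorm_le))
      (by positivity : (0:ℝ) ≤ 1 + ‖wst‖)]
  have heq : ε * ‖wst‖ ^ 2 + a wst wst = lam * b wst wst := by linarith
  have hnorm1 : ‖wst‖ = 1 := by
    have h1 : ε ≤ ε * ‖wst‖ ^ 2 := by linarith
    have h2 : 1 ≤ ‖wst‖ ^ 2 := by nlinarith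
    have h3 : ‖wst‖ ^ 2 ≤ 1 := by nlinarith [hnorm_le, norm_nonneg wst]
    rcases lt_trichotomy ‖wst‖ 1 with h | h | h
    · nlinarith [norm_nonneg wst]
    · exact h
    · nlinarith
  -- Euler-Lagrange
  have hEL : ∀ ψ : X, ε * ⟪wst, ψ⟫ + a wst ψ = lam * b wst ψ := by
    intro ψ
    have hq : ∀ t : ℝ, 0 ≤ 2 * t * (ε * ⟪wst, ψ⟫ + a wst ψ - lam * b wst ψ)
        + t ^ 2 * (ε * ‖ψ‖ ^ 2 + a ψ ψ - lam * b ψ ψ) := by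
      intro t
      have hg := hglobal (wst + t • ψ)
      have hn : ‖wst + t • ψ‖ ^ 2 = ‖wst‖ ^ 2 + 2 * (t * ⟪wst, ψ⟫) + t ^ 2 * ‖ψ‖ ^ 2 := by
        rw [norm_add_sq_real, real_inner_smul_right, norm_smul, Real.norm_eq_abs,
          mul_pow, sq_abs]
      have ha' : a (wst + t • ψ) (wst + t • ψ)
          = a wst wst + 2 * t * a wst ψ + t ^ 2 * a ψ ψ := by
        simp only [map_add, map_smul, LinearMap.add_apply, LinearMap.smul_apply, smul_eq_mul]
        linear_combination t * ha_symm ψ wst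
      have hb' : b (wst + t • ψ) (wst + t • ψ)
          = b wst wst + 2 * t * b wst ψ + t ^ 2 * b ψ ψ := by
        simp only [map_add, map_smul, LinearMap.add_apply, LinearMap.smul_apply, smul_eq_mul]
        linear_combination t * hb_symm ψ wst
      rw [hn, ha', hb'] at hg
      linarith
    have hL := pp_quad_zero hq
    linarith
  -- sign normalization
  by_cases hsgn : 0 ≤ a wst u0
  · exact ⟨wst, hnorm1, hsgn, hEL⟩
  · refine ⟨-wst, by rw [norm_neg]; exact hnorm1, ?_, ?_⟩
    · simp only [map_neg, LinearMap.neg_apply]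
      push_neg at hsgn
      linarith
    · intro ψ
      have h := hEL ψ
      simp only [inner_neg_left, map_neg, LinearMap.neg_apply]
      linarith

set_option maxHeartbeats 1000000 in
lemma pp_no_two_dim (a b : X →ₗ[ℝ] X →ₗ[ℝ] ℝ)
    (ha_symm : ∀ u v : X, a u v = a v u)
    (hb_symm : ∀ u v : X, b u v = b v u)
    (hb_posdef : ∀ u : X, u ≠ 0 → 0 < b u u)
    (lam0 : ℝ) (hlam0 : 0 < lam0) (u0 : X)
    (h_eig0 : ∀ φ : X, a u0 φ = lam0 * b u0 φ)
    (lam2 : ℝ)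
    (h_gap : ∀ ξ : X, a ξ u0 = 0 → lam2 * b ξ ξ ≤ a ξ ξ)
    (ε μ ν : ℝ) (hε : 0 < ε) (hμ : μ < lam2) (hν : ν < lam2) (w z : X)
    (hw : w ≠ 0) (hz : z ≠ 0)
    (ew : ∀ φ : X, ε * ⟪w, φ⟫ + a w φ = μ * b w φ)
    (ez : ∀ φ : X, ε * ⟪z, φ⟫ + a z φ = ν * b z φ)
    (hind : ∀ t : ℝ, w ≠ t • z) : False := by
  classical
  have key : ∀ ξ : X, ξ ≠ 0 → b ξ u0 = 0 → a ξ ξ < lam2 * b ξ ξ → False := by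
    intro ξ hξ hbu h
    have h1 : a ξ u0 = 0 := by
      rw [ha_symm ξ u0, h_eig0 ξ, ← hb_symm ξ u0, hbu, mul_zero]
    have h2 := h_gap ξ h1
    linarith
  by_cases hbw : b w u0 = 0
  · -- use w itself
    have hbww : 0 < b w w := hb_posdef w hw
    have hnw : 0 < ‖w‖ := norm_pos_iff.mpr hw
    have e1 := ew w
    rw [real_inner_self_eq_norm_sq] at e1
    apply key w hw hbw
    nlinarith
  · set α : ℝ := b z u0 with hα
    set β : ℝ := b w u0 with hβ
    set ξ : X := α • w - β • z with hξdef
    clear_value α β ξ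
    have hξne : ξ ≠ 0 := by
      intro h
      rw [hξdef, sub_eq_zero] at h
      by_cases hα0 : α = 0
      · rw [hα0, zero_smul] at h
        exact hz ((smul_eq_zero.mp h.symm).resolve_left hbw)
      · refine hind (β / α) ?_
        calc w = α⁻¹ • (α • w) := by rw [smul_smul, inv_mul_cancel₀ hα0, one_smul]
          _ = α⁻¹ • (β • z) := by rw [h]
          _ = (β / α) • z := by rw [smul_smul]; congr 1; field_simp
    have hbξ : b ξ u0 = 0 := by
      rw [hξdef]
      simp only [map_sub, map_smul, LinearMap.sub_apply, LinearMap.smul_apply, smul_eq_mul]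
      rw [← hα, ← hβ]
      ring
    have hbξξ : 0 < b ξ ξ := hb_posdef ξ hξne
    have hnξ : 0 < ‖ξ‖ := norm_pos_iff.mpr hξne
    apply key ξ hξne hbξ
    by_cases hμν : μ = ν
    · -- ξ satisfies the eigen-equation for μ
      have eξ : ∀ φ : X, ε * ⟪ξ, φ⟫ + a ξ φ = μ * b ξ φ := by
        intro φ
        have h1 := ew φ
        have h2 := ez φ
        rw [← hμν] at h2
        rw [hξdef]
        simp only [inner_sub_left, real_inner_smul_left, map_sub, map_smul,
          LinearMap.sub_apply, LinearMap.smul_apply, smul_eq_mul]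
        linear_combination α * h1 - β * h2
      have e1 := eξ ξ
      rw [real_inner_self_eq_norm_sq] at e1
      nlinarith [e1, hbξξ, hμ, mul_pos hε (pow_pos hnξ 2), mul_pos (sub_pos.mpr hμ) hbξξ]
    · -- cross terms vanish
      have horth : b w z = 0 := by
        have h1 := ew z
        have h2 := ez w
        rw [real_inner_comm] at h2
        rw [ha_symm z w] at h2
        rw [hb_symm z w] at h2
        have h4 : (μ - ν) * b w z = 0 := by linarith
        rcases mul_eq_zero.mp h4 with h | h
        · exact absurd (by linarith : μ = ν) hμν
        · exact h
      have h7 : b z w = 0 := by rw [hb_symm z w]; exact horth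
      have hbww : 0 < b w w := hb_posdef w hw
      have hbzz : 0 < b z z := hb_posdef z hz
      have hsym_i : ⟪z, w⟫ = ⟪w, z⟫ := real_inner_comm w z
      have hsym_a : a z w = a w z := ha_symm z w
      have eqA : a ξ ξ = α ^ 2 * a w w - 2 * α * β * a w z + β ^ 2 * a z z := by
        rw [hξdef]
        simp only [map_sub, map_smul, LinearMap.sub_apply, LinearMap.smul_apply, smul_eq_mul]
        linear_combination (-(α * β)) * hsym_a
      have eqB : b ξ ξ = α ^ 2 * b w w + β ^ 2 * b z z := by
        rw [hξdef]
        simp only [map_sub, map_smul, LinearMap.sub_apply, LinearMap.smul_apply, smul_eq_mul]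
        linear_combination (-(α * β)) * (hb_symm z w) - 2 * (α * β) * horth
      have eqNorm : ‖ξ‖ ^ 2 = α ^ 2 * ⟪w, w⟫ - 2 * α * β * ⟪w, z⟫ + β ^ 2 * ⟪z, z⟫ := by
        rw [← real_inner_self_eq_norm_sq, hξdef]
        simp only [inner_sub_left, inner_sub_right, real_inner_smul_left,
          real_inner_smul_right]
        linear_combination (-(α * β)) * hsym_i
      have e1 := ew ξ
      have e2 := ez ξ
      rw [hξdef] at e1 e2
      simp only [inner_sub_right, real_inner_smul_right, map_sub, map_smul, smul_eq_mul] at e1 e2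
      have eqC : ε * ‖ξ‖ ^ 2 + a ξ ξ = μ * (α ^ 2 * b w w) + ν * (β ^ 2 * b z z) := by
        linear_combination α * e1 - β * e2 + ε * eqNorm + (ε * α * β) * hsym_i + eqA
          + (α * β) * hsym_a - (μ * α * β) * horth - (ν * α * β) * h7
      have eqB2 : lam2 * b ξ ξ = lam2 * (α ^ 2 * b w w) + lam2 * (β ^ 2 * b z z) := by
        rw [eqB]; ring
      nlinarith [eqC, eqB2, mul_pos hε (pow_pos hnξ 2),
        mul_nonneg (sub_nonneg.mpr hμ.le) (mul_nonneg (sq_nonneg α) hbww.le),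
        mul_nonneg (sub_nonneg.mpr hν.le) (mul_nonneg (sq_nonneg β) hbzz.le)]

set_option maxHeartbeats 1000000 in
lemma pp_conv_helper [CompleteSpace X] (a b : X →ₗ[ℝ] X →ₗ[ℝ] ℝ)
    (ha_symm : ∀ u v : X, a u v = a v u)
    (hb_symm : ∀ u v : X, b u v = b v u)
    (hb_posdef : ∀ u : X, u ≠ 0 → 0 < b u u)
    (hb_compact : ∀ (v : ℕ → X) (w : X),
        (∀ φ : X, Filter.Tendsto (fun k => ⟪v k, φ⟫) Filter.atTop (nhds ⟪w, φ⟫)) →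
        Filter.Tendsto (fun k => b (v k - w) (v k - w)) Filter.atTop (nhds 0))
    (lam0 : ℝ) (hlam0 : 0 < lam0) (u0 : X) (hu0 : ‖u0‖ = 1)
    (h_eig0 : ∀ φ : X, a u0 φ = lam0 * b u0 φ)
    (h_rayleigh : ∀ u : X, lam0 * b u u ≤ a u u)
    (lam2 : ℝ) (hlam2 : lam0 < lam2)
    (h_gap : ∀ ξ : X, a ξ u0 = 0 → lam2 * b ξ ξ ≤ a ξ ξ)
    {Ca Cb : ℝ} (hCa : ∀ u v : X, |a u v| ≤ Ca * ‖u‖ * ‖v‖)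
    (hCb : ∀ u v : X, |b u v| ≤ Cb * ‖u‖ * ‖v‖)
    (C : ℝ) (v : ℕ → X) (εs : ℕ → ℝ)
    (hvb : ∀ k, ‖v k‖ ≤ 1)
    (hε0 : Tendsto εs atTop (nhds 0))
    (hev : ∀ᶠ k in atTop, ‖v k‖ = 1 ∧ b u0 u0 ≤ b (v k) (v k) ∧
        a (v k) (v k) - lam0 * b (v k) (v k) ≤ εs k * C ∧ 0 ≤ b (v k) u0) :
    ∃ ms : ℕ → ℕ, Tendsto (fun n => v (ms n)) atTop (nhds u0) := by
  classical
  have hu0ne : u0 ≠ 0 := by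
    intro h
    rw [h, norm_zero] at hu0
    exact one_ne_zero hu0.symm
  have hb00 : 0 < b u0 u0 := hb_posdef u0 hu0ne
  obtain ⟨wst, φm, hφm, hweak⟩ := pp_weak_seq_compact v 1 hvb
  have hev' : ∀ᶠ k in atTop, ‖v (φm k)‖ = 1 ∧ b u0 u0 ≤ b (v (φm k)) (v (φm k)) ∧
      a (v (φm k)) (v (φm k)) - lam0 * b (v (φm k)) (v (φm k)) ≤ εs (φm k) * C ∧
      0 ≤ b (v (φm k)) u0 :=
    hφm.tendsto_atTop.eventually hev
  have hexpvv : ∀ x : X, b x x = b (x - wst) (x - wst) + 2 * b x wst - b wst wst := by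
    intro x
    simp only [map_sub, LinearMap.sub_apply]
    linear_combination hb_symm wst x
  have hdiff := hb_compact (fun k => v (φm k)) wst (fun y => hweak y)
  have hcross := pp_bilin_weak_tendsto b hCb hweak wst
  have hbvv : Tendsto (fun n => b (v (φm n)) (v (φm n))) atTop (nhds (b wst wst)) := by
    have h := (hdiff.add (hcross.const_mul 2)).sub
      (tendsto_const_nhds : Tendsto (fun _ : ℕ => b wst wst) atTop (nhds (b wst wst)))
    have h2 : (0 : ℝ) + 2 * b wst wst - b wst wst = b wst wst := by ring
    rw [h2] at h
    apply h.congr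
    intro n
    rw [hexpvv (v (φm n))]
  have hbw_ge : b u0 u0 ≤ b wst wst :=
    ge_of_tendsto hbvv (hev'.mono fun k hk => hk.2.1)
  have hpa := pp_bilin_weak_tendsto a hCa hweak wst
  have hpb := pp_bilin_weak_tendsto b hCb hweak wst
  -- p (wst) ≤ 0
  have hp0 : Tendsto (fun n => a (v (φm n)) (v (φm n)) - lam0 * b (v (φm n)) (v (φm n)))
      atTop (nhds 0) := by
    have hg : Tendsto (fun n => εs (φm n) * C) atTop (nhds 0) := by
      have := (hε0.comp hφm.tendsto_atTop).mul_const C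
      simpa using this
    refine squeeze_zero' (Filter.Eventually.of_forall fun n => ?_)
      (hev'.mono fun k hk => hk.2.2.1) hg
    have := h_rayleigh (v (φm n))
    linarith
  have hpw_le : a wst wst - lam0 * b wst wst ≤ 0 := by
    have hT : ∀ n, 0 ≤ (a (v (φm n)) (v (φm n)) - lam0 * b (v (φm n)) (v (φm n)))
        - 2 * (a (v (φm n)) wst - lam0 * b (v (φm n)) wst)
        + (a wst wst - lam0 * b wst wst) := by
      intro n
      have h1 := h_rayleigh (v (φm n) - wst)
      simp only [map_sub, LinearMap.sub_apply] at h1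
      have h2 := ha_symm wst (v (φm n))
      have h3 := hb_symm wst (v (φm n))
      have h4 : lam0 * b wst (v (φm n)) = lam0 * b (v (φm n)) wst := by rw [h3]
      linarith
    have hTend : Tendsto (fun n => (a (v (φm n)) (v (φm n)) - lam0 * b (v (φm n)) (v (φm n)))
        - 2 * (a (v (φm n)) wst - lam0 * b (v (φm n)) wst)
        + (a wst wst - lam0 * b wst wst)) atTop
        (nhds (0 - 2 * (a wst wst - lam0 * b wst wst) + (a wst wst - lam0 * b wst wst))) :=
      (hp0.sub ((hpa.sub (hpb.const_mul lam0)).const_mul 2)).add tendsto_const_nhds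
    have h0 := ge_of_tendsto hTend (Filter.Eventually.of_forall hT)
    linarith
  have hpw : a wst wst = lam0 * b wst wst :=
    le_antisymm (by linarith) (h_rayleigh wst)
  -- wst is a multiple of u0
  set cc : ℝ := b wst u0 / b u0 u0 with hcc
  set ξ : X := wst - cc • u0 with hξdef
  clear_value cc ξ
  have hpu0 : ∀ x : X, a x u0 = lam0 * b x u0 := fun x => by
    rw [ha_symm x u0, h_eig0 x, hb_symm x u0]
  have hbξu0 : b ξ u0 = 0 := by
    rw [hξdef]
    simp only [map_sub, map_smul, LinearMap.sub_apply, LinearMap.smul_apply, smul_eq_mul]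
    rw [hcc]
    field_simp
    ring
  have e1 : a ξ ξ = a wst wst - 2 * cc * a wst u0 + cc ^ 2 * a u0 u0 := by
    rw [hξdef]
    simp only [map_sub, map_smul, LinearMap.sub_apply, LinearMap.smul_apply, smul_eq_mul]
    linear_combination (-(cc)) * ha_symm u0 wst
  have e1b : b ξ ξ = b wst wst - 2 * cc * b wst u0 + cc ^ 2 * b u0 u0 := by
    rw [hξdef]
    simp only [map_sub, map_smul, LinearMap.sub_apply, LinearMap.smul_apply, smul_eq_mul]
    linear_combination (-(cc)) * hb_symm u0 wst
  have e3 : cc * a wst u0 = cc * (lam0 * b wst u0) := by rw [hpu0 wst]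
  have e4 : cc ^ 2 * a u0 u0 = cc ^ 2 * (lam0 * b u0 u0) := by rw [h_eig0 u0]
  have hpξ : a ξ ξ = lam0 * b ξ ξ := by
    rw [e1, e1b]
    linarith [e3, e4, hpw]
  have haξu0 : a ξ u0 = 0 := by
    rw [hpu0 ξ, hbξu0, mul_zero]
  have hgapξ := h_gap ξ haξu0
  have hξ0 : ξ = 0 := by
    by_contra h
    have h1 := hb_posdef ξ h
    nlinarith [hgapξ, hpξ, hlam2]
  have hwstc : wst = cc • u0 := by
    rw [hξdef] at hξ0
    exact sub_eq_zero.mp hξ0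
  -- cc = 1
  have hbcc : b wst wst = cc ^ 2 * b u0 u0 := by
    rw [hwstc]
    simp only [map_smul, LinearMap.smul_apply, smul_eq_mul]
    ring
  have hcc2 : 1 ≤ cc ^ 2 := by
    rw [hbcc] at hbw_ge
    nlinarith [hb00]
  have hccnn : 0 ≤ cc := by
    have hbu0lim := pp_bilin_weak_tendsto b hCb hweak u0
    have h1 : 0 ≤ b wst u0 :=
      ge_of_tendsto hbu0lim (hev'.mono fun k hk => hk.2.2.2)
    rw [hcc]
    exact div_nonneg h1 hb00.le
  have hnorm_le : ‖wst‖ ≤ 1 := by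
    have h1 := hweak wst
    have h2 : ∀ n, ⟪v (φm n), wst⟫ ≤ ‖wst‖ := by
      intro n
      calc ⟪v (φm n), wst⟫ ≤ ‖v (φm n)‖ * ‖wst‖ := real_inner_le_norm _ _
        _ ≤ 1 * ‖wst‖ := by
            apply mul_le_mul_of_nonneg_right (hvb _) (norm_nonneg _)
        _ = ‖wst‖ := one_mul _
    have h3 : ⟪wst, wst⟫ ≤ ‖wst‖ := le_of_tendsto h1 (Filter.Eventually.of_forall h2)
    rw [real_inner_self_eq_norm_sq] at h3
    nlinarith [norm_nonneg wst]
  have hccle : cc ≤ 1 := by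
    have h1 : ‖wst‖ = cc := by
      rw [hwstc, norm_smul, Real.norm_eq_abs, abs_of_nonneg hccnn, hu0, mul_one]
    linarith [hnorm_le, h1.symm.le]
  have hcc1 : cc = 1 := by
    rcases lt_trichotomy cc 1 with h | h | h
    · nlinarith
    · exact h
    · linarith
  have hwst_u0 : wst = u0 := by rw [hwstc, hcc1, one_smul]
  -- strong convergence
  refine ⟨φm, ?_⟩
  rw [tendsto_iff_norm_sub_tendsto_zero]
  have hinner : Tendsto (fun n => ⟪v (φm n), u0⟫) atTop (nhds 1) := by
    have h := hweak u0
    rw [hwst_u0, real_inner_self_eq_norm_sq, hu0] at h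
    simpa using h
  have hsq : Tendsto (fun n => ‖v (φm n) - u0‖ ^ 2) atTop (nhds 0) := by
    have h1 : Tendsto (fun n => 2 - 2 * ⟪v (φm n), u0⟫) atTop (nhds (2 - 2 * 1)) :=
      tendsto_const_nhds.sub (hinner.const_mul 2)
    have h2 : (2 : ℝ) - 2 * 1 = 0 := by ring
    rw [h2] at h1
    apply h1.congr'
    filter_upwards [hev'] with n hn
    rw [norm_sub_sq_real, hn.1, hu0]
    ring
  have h3 := (Real.continuous_sqrt.tendsto 0).comp hsq
  rw [Real.sqrt_zero] at h3
  apply h3.congr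
  intro n
  simp only [Function.comp_apply]
  rw [Real.sqrt_sq (norm_nonneg _)]

end AuxLemmas

set_option maxHeartbeats 2000000 in
/-- Abstract form of Theorem 1.2: for all small `ε > 0` the ε-perturbed problem admits a
normalized, sign-normalized principal eigenpair `(λ_ε, u_ε)` given by the Rayleigh infimum;
`λ₀ < λ_ε ≤ λ₀ + ε / b(u₀, u₀)`; the eigenspace of `λ_ε` is one-dimensional; `u_ε` is not
in the range of the perturbed operator (algebraic simplicity); `λ_ε` is the unique perturbed
eigenvalue in a fixed neighborhood of `λ₀`; and `(λ_ε, u_ε) → (λ₀, u₀)` as `ε → 0⁺`. -/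
theorem perturbed_principal_eigenpair
    {X : Type*} [NormedAddCommGroup X] [InnerProductSpace ℝ X] [CompleteSpace X]
    (a b : X →ₗ[ℝ] X →ₗ[ℝ] ℝ)
    (ha_symm : ∀ u v : X, a u v = a v u)
    (hb_symm : ∀ u v : X, b u v = b v u)
    (ha_cont : Continuous fun p : X × X => a p.1 p.2)
    (hb_cont : Continuous fun p : X × X => b p.1 p.2)
    (ha_nonneg : ∀ u : X, 0 ≤ a u u)
    (hb_posdef : ∀ u : X, u ≠ 0 → 0 < b u u)
    (hb_compact : ∀ (v : ℕ → X) (w : X),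
        (∀ φ : X, Filter.Tendsto (fun k => ⟪v k, φ⟫) Filter.atTop (nhds ⟪w, φ⟫)) →
        Filter.Tendsto (fun k => b (v k - w) (v k - w)) Filter.atTop (nhds 0))
    (lam0 : ℝ) (hlam0 : 0 < lam0) (u0 : X) (hu0 : ‖u0‖ = 1)
    (h_eig0 : ∀ φ : X, a u0 φ = lam0 * b u0 φ)
    (h_rayleigh : ∀ u : X, lam0 * b u u ≤ a u u)
    (lam2 : ℝ) (hlam2 : lam0 < lam2)
    (h_gap : ∀ ξ : X, a ξ u0 = 0 → lam2 * b ξ ξ ≤ a ξ ξ)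
    : ∃ s : ℝ, 0 < s ∧ ∃ δ : ℝ, 0 < δ ∧ ∃ (lam : ℝ → ℝ) (u : ℝ → X),
      (∀ ε : ℝ, 0 < ε → ε < s →
        (u ε ≠ 0 ∧ ‖u ε‖ = 1 ∧ 0 ≤ a (u ε) u0 ∧
          (∀ φ : X, ε * ⟪u ε, φ⟫ + a (u ε) φ = lam ε * b (u ε) φ) ∧
          lam ε = sInf {r : ℝ | ∃ w : X, w ≠ 0 ∧ r = (ε * ‖w‖ ^ 2 + a w w) / b w w}) ∧
        (lam0 < lam ε ∧ lam ε ≤ lam0 + ε / b u0 u0) ∧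
        Module.rank ℝ ↥(eigSpace a b ε (lam ε)) = 1 ∧
        (¬ ∃ v : X, ∀ φ : X, ε * ⟪v, φ⟫ + a v φ - lam ε * b v φ = ⟪u ε, φ⟫) ∧
        (∀ μ : ℝ, ∀ w : X, w ≠ 0 →
          (∀ φ : X, ε * ⟪w, φ⟫ + a w φ = μ * b w φ) → |μ - lam0| < δ → μ = lam ε)) ∧
      Tendsto lam (nhdsWithin 0 (Set.Ioi 0)) (nhds lam0) ∧
      Tendsto u (nhdsWithin 0 (Set.Ioi 0)) (nhds u0) := by
  classical
  obtain ⟨Ca, hCa0, hCa⟩ := pp_bilin_bound a ha_cont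
  obtain ⟨Cb, hCb0, hCb⟩ := pp_bilin_bound b hb_cont
  have hu0ne : u0 ≠ 0 := by
    intro h
    rw [h, norm_zero] at hu0
    exact one_ne_zero hu0.symm
  have hb00 : 0 < b u0 u0 := hb_posdef u0 hu0ne
  have ha00 : a u0 u0 = lam0 * b u0 u0 := h_eig0 u0
  set s : ℝ := (lam2 - lam0) * b u0 u0 with hs
  have hspos : 0 < s := mul_pos (sub_pos.mpr hlam2) hb00
  set δ : ℝ := (lam2 - lam0) / 2 with hδdef
  have hδpos : 0 < δ := by rw [hδdef]; linarith
  set lam : ℝ → ℝ := fun ε => if 0 < ε then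
    sInf {r : ℝ | ∃ w : X, w ≠ 0 ∧ r = (ε * ‖w‖ ^ 2 + a w w) / b w w} else lam0 with hlamdef
  have hlamval : ∀ ε : ℝ, 0 < ε →
      lam ε = sInf {r : ℝ | ∃ w : X, w ≠ 0 ∧ r = (ε * ‖w‖ ^ 2 + a w w) / b w w} := by
    intro ε hε
    rw [hlamdef]
    simp only [if_pos hε]
  have key : ∀ ε : ℝ, 0 < ε → ∃ uu : X, ‖uu‖ = 1 ∧ 0 ≤ a uu u0 ∧
      ∀ φ : X, ε * ⟪uu, φ⟫ + a uu φ = lam ε * b uu φ := by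
    intro ε hε
    obtain ⟨uu, h1, h2, h3⟩ := pp_exists_eigen a b ha_symm hb_symm hb_cont ha_nonneg
      hb_posdef hb_compact lam0 hlam0 u0 hu0 h_rayleigh hCa ε hε
    refine ⟨uu, h1, h2, fun φ => ?_⟩
    rw [hlamval ε hε]
    exact h3 φ
  set u : ℝ → X := fun ε => if h : 0 < ε then (key ε h).choose else u0 with hudef
  have hu_norm : ∀ ε : ℝ, 0 < ε → ‖u ε‖ = 1 := by
    intro ε hε
    rw [hudef]
    simp only [dif_pos hε]
    exact (key ε hε).choose_spec.1
  have hu_sign : ∀ ε : ℝ, 0 < ε → 0 ≤ a (u ε) u0 := by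
    intro ε hε
    rw [hudef]
    simp only [dif_pos hε]
    exact (key ε hε).choose_spec.2.1
  have hu_eig : ∀ ε : ℝ, 0 < ε → ∀ φ : X,
      ε * ⟪u ε, φ⟫ + a (u ε) φ = lam ε * b (u ε) φ := by
    intro ε hε
    rw [hudef]
    simp only [dif_pos hε]
    exact (key ε hε).choose_spec.2.2
  have hu_ne : ∀ ε : ℝ, 0 < ε → u ε ≠ 0 := by
    intro ε hε h
    have h1 := hu_norm ε hε
    rw [h, norm_zero] at h1
    exact one_ne_zero h1.symm
  have hu_norm_le : ∀ ε : ℝ, ‖u ε‖ ≤ 1 := by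
    intro ε
    by_cases hε : 0 < ε
    · exact (hu_norm ε hε).le
    · rw [hudef]; simp only [dif_neg hε]; exact hu0.le
  -- bounds on lam
  have hbddS : ∀ ε : ℝ, 0 < ε →
      BddBelow {r : ℝ | ∃ w : X, w ≠ 0 ∧ r = (ε * ‖w‖ ^ 2 + a w w) / b w w} := by
    intro ε hε
    refine ⟨lam0, ?_⟩
    rintro r ⟨w, hw, rfl⟩
    rw [le_div_iff₀ (hb_posdef w hw)]
    have h1 := h_rayleigh w
    have h2 : 0 ≤ ε * ‖w‖ ^ 2 := by positivity
    linarith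
  have hlam_ub : ∀ ε : ℝ, 0 < ε → lam ε ≤ lam0 + ε / b u0 u0 := by
    intro ε hε
    rw [hlamval ε hε]
    have hmem : (ε * ‖u0‖ ^ 2 + a u0 u0) / b u0 u0 ∈
        {r : ℝ | ∃ w : X, w ≠ 0 ∧ r = (ε * ‖w‖ ^ 2 + a w w) / b w w} := ⟨u0, hu0ne, rfl⟩
    have h1 := csInf_le (hbddS ε hε) hmem
    have h2 : (ε * ‖u0‖ ^ 2 + a u0 u0) / b u0 u0 = lam0 + ε / b u0 u0 := by
      rw [hu0, ha00]
      field_simp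
      ring
    linarith
  have hlam_gt : ∀ ε : ℝ, 0 < ε → lam0 < lam ε := by
    intro ε hε
    have h1 := hu_eig ε hε (u ε)
    rw [real_inner_self_eq_norm_sq, hu_norm ε hε] at h1
    have h2 := h_rayleigh (u ε)
    have h3 : 0 < b (u ε) (u ε) := hb_posdef _ (hu_ne ε hε)
    nlinarith
  have hb_lb : ∀ ε : ℝ, 0 < ε → b u0 u0 ≤ b (u ε) (u ε) := by
    intro ε hε
    have h1 := hu_eig ε hε (u ε)
    rw [real_inner_self_eq_norm_sq, hu_norm ε hε] at h1
    have h2 := h_rayleigh (u ε)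
    have hub := hlam_ub ε hε
    have h3 : 0 < b (u ε) (u ε) := hb_posdef _ (hu_ne ε hε)
    have h4 : lam ε * b (u ε) (u ε) ≤ (lam0 + ε / b u0 u0) * b (u ε) (u ε) :=
      mul_le_mul_of_nonneg_right hub h3.le
    have h5 : ε ≤ ε / b u0 u0 * b (u ε) (u ε) := by nlinarith
    rw [div_mul_eq_mul_div, le_div_iff₀ hb00] at h5
    exact le_of_mul_le_mul_left (by linarith) hε
  have hp_ub : ∀ ε : ℝ, 0 < ε →
      a (u ε) (u ε) - lam0 * b (u ε) (u ε) ≤ ε * (Cb / b u0 u0) := by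
    intro ε hε
    have h1 := hu_eig ε hε (u ε)
    rw [real_inner_self_eq_norm_sq, hu_norm ε hε] at h1
    have hub := hlam_ub ε hε
    have h3 : 0 < b (u ε) (u ε) := hb_posdef _ (hu_ne ε hε)
    have hbub : b (u ε) (u ε) ≤ Cb := by
      have := hCb (u ε) (u ε)
      rw [hu_norm ε hε] at this
      calc b (u ε) (u ε) ≤ |b (u ε) (u ε)| := le_abs_self _
        _ ≤ Cb * 1 * 1 := this
        _ = Cb := by ring
    have h4 : lam ε * b (u ε) (u ε) ≤ (lam0 + ε / b u0 u0) * b (u ε) (u ε) :=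
      mul_le_mul_of_nonneg_right hub h3.le
    have h5 : ε / b u0 u0 * b (u ε) (u ε) ≤ ε / b u0 u0 * Cb :=
      mul_le_mul_of_nonneg_left hbub (by positivity)
    have h6 : ε / b u0 u0 * Cb = ε * (Cb / b u0 u0) := by ring
    nlinarith
  have hbu0_nn : ∀ ε : ℝ, 0 < ε → 0 ≤ b (u ε) u0 := by
    intro ε hε
    have h1 := hu_sign ε hε
    rw [ha_symm (u ε) u0, h_eig0 (u ε), hb_symm u0 (u ε)] at h1
    nlinarith
  -- uniqueness dichotomy
  have hlam_lt2 : ∀ ε : ℝ, 0 < ε → ε < s → lam ε < lam2 := by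
    intro ε hε hεs
    have h1 := hlam_ub ε hε
    have h2 : ε / b u0 u0 < s / b u0 u0 := by gcongr
    have h3 : s / b u0 u0 = lam2 - lam0 := by
      rw [hs, mul_div_assoc, div_self hb00.ne', mul_one]
    linarith
  have hone : ∀ ε : ℝ, 0 < ε → ε < s → ∀ w : X,
      (∀ φ : X, ε * ⟪w, φ⟫ + a w φ = lam ε * b w φ) → ∃ t : ℝ, w = t • u ε := by
    intro ε hε hεs w hw
    by_contra hcon
    push_neg at hcon
    have hwne : w ≠ 0 := by
      intro h
      exact hcon 0 (by rw [h, zero_smul])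
    exact pp_no_two_dim a b ha_symm hb_symm hb_posdef lam0 hlam0 u0 h_eig0 lam2 h_gap
      ε (lam ε) (lam ε) hε (hlam_lt2 ε hε hεs) (hlam_lt2 ε hε hεs) w (u ε) hwne
      (hu_ne ε hε) hw (hu_eig ε hε) hcon
  refine ⟨s, hspos, δ, hδpos, lam, u, fun ε hε hεs => ?_, ?_, ?_⟩
  · refine ⟨⟨hu_ne ε hε, hu_norm ε hε, hu_sign ε hε, hu_eig ε hε, hlamval ε hε⟩,
      ⟨hlam_gt ε hε, hlam_ub ε hε⟩, ?_, ?_, ?_⟩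
    · -- rank one
      have hmem : u ε ∈ eigSpace a b ε (lam ε) := fun φ => hu_eig ε hε φ
      apply rank_eq_one (⟨u ε, hmem⟩ : ↥(eigSpace a b ε (lam ε)))
      · intro h
        apply hu_ne ε hε
        exact congrArg Subtype.val h
      · rintro ⟨w, hw⟩
        obtain ⟨t, ht⟩ := hone ε hε hεs w hw
        refine ⟨t, ?_⟩
        apply Subtype.ext
        simp only [SetLike.mk_smul_mk]
        exact ht.symm
    · -- algebraic simplicity
      rintro ⟨vv, hvv⟩
      have h1 := hvv (u ε)
      have h2 := hu_eig ε hε vv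
      have h3 : lam ε * b vv (u ε) = lam ε * b (u ε) vv := by rw [hb_symm]
      have h4 := ha_symm vv (u ε)
      have h5 := real_inner_comm vv (u ε)
      have h5' : ε * ⟪u ε, vv⟫ = ε * ⟪vv, u ε⟫ := by rw [h5]
      have h6 : (⟪u ε, u ε⟫ : ℝ) = 1 := by
        rw [real_inner_self_eq_norm_sq, hu_norm ε hε]
        norm_num
      linarith
    · -- local uniqueness of the eigenvalue
      intro μ w hwne heigw hμδ
      by_contra hne
      have habs := abs_lt.mp hμδ
      have hμlt : μ < lam2 := by
        rw [hδdef] at habs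
        linarith [habs.2]
      have hind : ∀ t : ℝ, w ≠ t • u ε := by
        intro t h
        apply hne
        have ht0 : t ≠ 0 := by
          intro h0
          rw [h0, zero_smul] at h
          exact hwne h
        have h1 := heigw (u ε)
        rw [h] at h1
        simp only [real_inner_smul_left, map_smul, LinearMap.smul_apply, smul_eq_mul] at h1
        have h2 := hu_eig ε hε (u ε)
        have hbuu : 0 < b (u ε) (u ε) := hb_posdef _ (hu_ne ε hε)
        have h7 : t * ((μ - lam ε) * b (u ε) (u ε)) = 0 := by
          linear_combination t * h2 - h1
        rcases mul_eq_zero.mp h7 with h8 | h8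
        · exact absurd h8 ht0
        · rcases mul_eq_zero.mp h8 with h9 | h9
          · linarith
          · exact absurd h9 hbuu.ne'
      exact pp_no_two_dim a b ha_symm hb_symm hb_posdef lam0 hlam0 u0 h_eig0 lam2 h_gap
        ε μ (lam ε) hε hμlt (hlam_lt2 ε hε hεs) w (u ε) hwne (hu_ne ε hε) heigw
        (hu_eig ε hε) hind
  · -- convergence of lam
    have hupper : Tendsto (fun ε : ℝ => lam0 + ε / b u0 u0) (nhdsWithin 0 (Set.Ioi 0))
        (nhds lam0) := by
      have h1 : Tendsto (fun ε : ℝ => lam0 + ε / b u0 u0) (nhds 0)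
          (nhds (lam0 + 0 / b u0 u0)) :=
        (continuous_const.add (continuous_id.div_const _)).tendsto 0
      rw [zero_div, add_zero] at h1
      exact h1.mono_left nhdsWithin_le_nhds
    refine tendsto_of_tendsto_of_tendsto_of_le_of_le' tendsto_const_nhds hupper ?_ ?_
    · filter_upwards [self_mem_nhdsWithin] with ε hε
      exact (hlam_gt ε hε).le
    · filter_upwards [self_mem_nhdsWithin] with ε hε
      exact hlam_ub ε hε
  · -- convergence of u
    apply Filter.tendsto_of_subseq_tendsto
    intro ns hns
    have hns0 : Tendsto ns atTop (nhds 0) := hns.mono_right nhdsWithin_le_nhds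
    have hmem : ∀ᶠ k in atTop, ns k ∈ Set.Ioi (0:ℝ) :=
      hns.eventually_mem self_mem_nhdsWithin
    have hev2 : ∀ᶠ k in atTop, ‖u (ns k)‖ = 1 ∧ b u0 u0 ≤ b (u (ns k)) (u (ns k)) ∧
        a (u (ns k)) (u (ns k)) - lam0 * b (u (ns k)) (u (ns k)) ≤ ns k * (Cb / b u0 u0) ∧
        0 ≤ b (u (ns k)) u0 := by
      filter_upwards [hmem] with k hk
      exact ⟨hu_norm (ns k) hk, hb_lb (ns k) hk, hp_ub (ns k) hk, hbu0_nn (ns k) hk⟩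
    obtain ⟨ms, hms⟩ := pp_conv_helper a b ha_symm hb_symm hb_posdef hb_compact lam0 hlam0
      u0 hu0 h_eig0 h_rayleigh lam2 hlam2 h_gap hCa hCb (Cb / b u0 u0)
      (fun k => u (ns k)) ns (fun k => hu_norm_le (ns k)) hns0 hev2
    exact ⟨ms, hms⟩
end
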